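/- arXiv:2210.13943 — 9 statements merged into one kernel-verified Lean document; each statement's English description precedes it below -/
import Mathlib

section
/- For every n×k real matrix X all of whose entries lie in the interval [−1,1], there exists an n×k matrix Y all of whose entries lie in {−1,1} such that det(L(Y)ᵀL(Y) + C) ≥ det(L(X)ᵀL(X) + C). (This is Theorem 1 of the paper: for any m-factor interaction model there exists a design maximizing the D-criterion, and the Bayesian D-criterion, all of whose coordinates equal ±1.) -/
open Matrix

/-- The model matrix of an `m`-factor interaction model given by the family `𝒮` of
subsets of factor indices: entry `(i, S)` is `∏_{j ∈ S} X i j`. -/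
noncomputable def modelMatrix {n k : ℕ} (𝒮 : Finset (Finset (Fin k)))
    (X : Matrix (Fin n) (Fin k) ℝ) : Matrix (Fin n) {S // S ∈ 𝒮} ℝ :=
  Matrix.of fun i S => ∏ j ∈ S.1, X i j

/-- The full matrix `L(X) = [F(X) | Z]`. -/
noncomputable def fullMatrix {n k b : ℕ} (𝒮 : Finset (Finset (Fin k)))
    (Z : Matrix (Fin n) (Fin b) ℝ) (X : Matrix (Fin n) (Fin k) ℝ) :
    Matrix (Fin n) ({S // S ∈ 𝒮} ⊕ Fin b) ℝ :=
  Matrix.fromCols (modelMatrix 𝒮 X) Z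

section Aux

variable {ι : Type*} [Fintype ι] [DecidableEq ι]

/-- A convex quadratic on `[-1,1]` is maximized at an endpoint. -/
lemma quad_max (c0 c1 c2 t : ℝ) (hc2 : 0 ≤ c2) (ht : t ∈ Set.Icc (-1:ℝ) 1) :
    c0 + c1 * t + c2 * t ^ 2 ≤
      max (c0 + c1 * (-1) + c2 * (-1) ^ 2) (c0 + c1 * 1 + c2 * 1 ^ 2) := by
  obtain ⟨h1, h2⟩ := ht
  have ht2 : t ^ 2 ≤ 1 := by nlinarith
  rcases le_total 0 c1 with h | h
  · refine le_max_of_le_right ?_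
    nlinarith [mul_nonneg h (sub_nonneg.mpr h2), mul_nonneg hc2 (sub_nonneg.mpr ht2)]
  · refine le_max_of_le_left ?_
    nlinarith [mul_nonneg (neg_nonneg.mpr h) (sub_nonneg.mpr (neg_le_iff_add_nonneg.mp h1 : (0:ℝ) ≤ t + 1)), mul_nonneg hc2 (sub_nonneg.mpr ht2)]

lemma row_inv_col (M : Matrix ι ι ℝ) (u v : ι → ℝ) (d1 d2 : Unit) :
    (replicateRow Unit v * M * replicateCol Unit u) d1 d2 = v ⬝ᵥ M *ᵥ u := by
  simp only [mul_apply, replicateRow_apply, replicateCol_apply, dotProduct, mulVec, Finset.sum_mul,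
    Finset.mul_sum]
  rw [Finset.sum_comm]
  exact Finset.sum_congr rfl fun i _ => Finset.sum_congr rfl fun j _ => by ring

lemma det_rank_one_pd (M : Matrix ι ι ℝ) (hM : M.PosDef) (u : ι → ℝ) :
    (M + vecMulVec u u).det = M.det + M.det * (u ⬝ᵥ M⁻¹ *ᵥ u) := by
  have hdet : IsUnit M.det := hM.det_pos.ne'.isUnit
  have h2 : (1 + replicateRow Unit u * M⁻¹ * replicateCol Unit u).det = 1 + u ⬝ᵥ M⁻¹ *ᵥ u := by
    rw [det_unique, Matrix.add_apply, one_apply_eq, row_inv_col]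
  rw [vecMulVec_eq Unit, det_add_replicateCol_mul_replicateRow hdet, h2]
  ring

/-- Key convexity step in the positive definite case. -/
lemma det_pd_quad (M : Matrix ι ι ℝ) (hM : M.PosDef) (a bb : ι → ℝ) (t : ℝ)
    (ht : t ∈ Set.Icc (-1:ℝ) 1) :
    (M + vecMulVec (a + t • bb) (a + t • bb)).det ≤
      max (M + vecMulVec (a + (-1:ℝ) • bb) (a + (-1:ℝ) • bb)).det
          (M + vecMulVec (a + (1:ℝ) • bb) (a + (1:ℝ) • bb)).det := by
  have hexp : ∀ s : ℝ, (M + vecMulVec (a + s • bb) (a + s • bb)).det =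
      (M.det + M.det * (a ⬝ᵥ M⁻¹ *ᵥ a)) +
        (M.det * (a ⬝ᵥ M⁻¹ *ᵥ bb + bb ⬝ᵥ M⁻¹ *ᵥ a)) * s +
        (M.det * (bb ⬝ᵥ M⁻¹ *ᵥ bb)) * s ^ 2 := by
    intro s
    rw [det_rank_one_pd M hM]
    simp only [mulVec_add, mulVec_smul, dotProduct_add, add_dotProduct, smul_dotProduct,
      dotProduct_smul, smul_eq_mul]
    ring
  have hc2 : 0 ≤ M.det * (bb ⬝ᵥ M⁻¹ *ᵥ bb) := by
    have h1 := hM.inv.posSemidef.dotProduct_mulVec_nonneg bb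
    simp only [star_trivial] at h1
    exact mul_nonneg hM.det_pos.le h1
  rw [hexp t, hexp (-1), hexp 1]
  exact quad_max _ _ _ t hc2 ht

/-- Key convexity step, positive semidefinite case, by perturbation. -/
lemma det_psd_quad (M : Matrix ι ι ℝ) (hM : M.PosSemidef) (a bb : ι → ℝ) (t : ℝ)
    (ht : t ∈ Set.Icc (-1:ℝ) 1) :
    (M + vecMulVec (a + t • bb) (a + t • bb)).det ≤
      max (M + vecMulVec (a + (-1:ℝ) • bb) (a + (-1:ℝ) • bb)).det
          (M + vecMulVec (a + (1:ℝ) • bb) (a + (1:ℝ) • bb)).det := by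
  set F : ℝ → ℝ → ℝ := fun ε s =>
    ((M + ε • (1 : Matrix ι ι ℝ)) + vecMulVec (a + s • bb) (a + s • bb)).det with hF
  have hpos : ∀ ε : ℝ, 0 < ε → F ε t ≤ max (F ε (-1)) (F ε 1) := by
    intro ε hε
    have hPD : (M + ε • (1 : Matrix ι ι ℝ)).PosDef := by
      rw [smul_one_eq_diagonal]
      exact Matrix.PosDef.posSemidef_add hM (posDef_diagonal_iff.mpr fun _ => hε)
    exact det_pd_quad _ hPD a bb t ht
  have hcont : ∀ s : ℝ, Continuous fun ε : ℝ => F ε s := by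
    intro s
    apply Continuous.matrix_det
    exact (continuous_const.add ((continuous_id).smul continuous_const)).add continuous_const
  have hlim : Filter.Tendsto (fun ε => max (F ε (-1)) (F ε 1) - F ε t)
      (nhdsWithin 0 (Set.Ioi 0)) (nhds (max (F 0 (-1)) (F 0 1) - F 0 t)) := by
    apply Filter.Tendsto.mono_left _ nhdsWithin_le_nhds
    exact (((hcont (-1)).max (hcont 1)).sub (hcont t)).tendsto 0
  have h0 : 0 ≤ max (F 0 (-1)) (F 0 1) - F 0 t := by
    refine ge_of_tendsto hlim ?_
    filter_upwards [self_mem_nhdsWithin] with ε hε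
    exact sub_nonneg.mpr (hpos ε hε)
  have hF0 : ∀ s : ℝ, F 0 s = (M + vecMulVec (a + s • bb) (a + s • bb)).det := by
    intro s; simp [hF]
  rw [hF0, hF0, hF0] at h0
  linarith [le_of_sub_nonneg h0]

end Aux

section Step

variable {n k b : ℕ}

/-- Rounding a single entry to `±1` without decreasing the criterion. -/
lemma step (𝒮 : Finset (Finset (Fin k))) (Z : Matrix (Fin n) (Fin b) ℝ)
    (C : Matrix ({S // S ∈ 𝒮} ⊕ Fin b) ({S // S ∈ 𝒮} ⊕ Fin b) ℝ) (hC : C.PosSemidef)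
    (X : Matrix (Fin n) (Fin k) ℝ) (hX : ∀ i j, X i j ∈ Set.Icc (-1:ℝ) 1)
    (i0 : Fin n) (j0 : Fin k) :
    ∃ X' : Matrix (Fin n) (Fin k) ℝ,
      (∀ i j, X' i j ∈ Set.Icc (-1:ℝ) 1) ∧ (X' i0 j0 = -1 ∨ X' i0 j0 = 1) ∧
      (∀ i j, (i ≠ i0 ∨ j ≠ j0) → X' i j = X i j) ∧
      ((fullMatrix 𝒮 Z X)ᵀ * fullMatrix 𝒮 Z X + C).det ≤
        ((fullMatrix 𝒮 Z X')ᵀ * fullMatrix 𝒮 Z X' + C).det := by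
  classical
  set Xt : ℝ → Matrix (Fin n) (Fin k) ℝ :=
    fun t => updateRow X i0 (Function.update (X i0) j0 t) with hXt
  set L : Matrix (Fin n) ({S // S ∈ 𝒮} ⊕ Fin b) ℝ := fullMatrix 𝒮 Z X with hL
  set L0 : Matrix (Fin n) ({S // S ∈ 𝒮} ⊕ Fin b) ℝ := updateRow L i0 0 with hL0
  set w : ℝ → ({S // S ∈ 𝒮} ⊕ Fin b) → ℝ := fun t c => fullMatrix 𝒮 Z (Xt t) i0 c with hwdef
  set a : ({S // S ∈ 𝒮} ⊕ Fin b) → ℝ := w 0 with ha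
  set bb : ({S // S ∈ 𝒮} ⊕ Fin b) → ℝ := fun c => w 1 c - w 0 c with hbb
  have hXtrow : ∀ (t : ℝ) (j : Fin k), Xt t i0 j = Function.update (X i0) j0 t j := by
    intro t j; simp [hXt]
  have hw : ∀ t : ℝ, w t = a + t • bb := by
    intro t
    funext c
    have hwc : ∀ s : ℝ, w s c = fullMatrix 𝒮 Z (Xt s) i0 c := fun s => rfl
    rcases c with S | c
    · have hval : ∀ s : ℝ, w s (Sum.inl S) = ∏ j ∈ S.1, Function.update (X i0) j0 s j := by
        intro s
        rw [hwc]
        simp only [fullMatrix, modelMatrix, fromCols, of_apply]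
        exact Finset.prod_congr rfl fun j _ => hXtrow s j
      by_cases hj : j0 ∈ S.1
      · have hprod : ∀ s : ℝ, w s (Sum.inl S) = s * ∏ j ∈ S.1 \ {j0}, X i0 j := by
          intro s; rw [hval s, Finset.prod_update_of_mem hj]
        simp only [Pi.add_apply, Pi.smul_apply, smul_eq_mul, ha, hbb, hprod]
        ring
      · have hprod : ∀ s : ℝ, w s (Sum.inl S) = ∏ j ∈ S.1, X i0 j := by
          intro s; rw [hval s, Finset.prod_update_of_notMem hj]
        simp only [Pi.add_apply, Pi.smul_apply, smul_eq_mul, ha, hbb, hprod]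
        ring
    · have hZ : ∀ s : ℝ, w s (Sum.inr c) = Z i0 c := by
        intro s; rw [hwc]; simp [fullMatrix, fromCols]
      simp only [Pi.add_apply, Pi.smul_apply, smul_eq_mul, ha, hbb, hZ]
      ring
  have hrow : ∀ (t : ℝ) (i : Fin n), i ≠ i0 → fullMatrix 𝒮 Z (Xt t) i = L i := by
    intro t i hi
    funext c
    rcases c with S | c
    · simp only [hL, fullMatrix, modelMatrix, fromCols, of_apply]
      exact Finset.prod_congr rfl fun j _ => by simp [hXt, updateRow_ne hi]
    · simp [hL, fullMatrix, fromCols]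
  have hdecomp : ∀ t : ℝ, (fullMatrix 𝒮 Z (Xt t))ᵀ * fullMatrix 𝒮 Z (Xt t) + C =
      (C + L0ᵀ * L0) + vecMulVec (w t) (w t) := by
    intro t
    ext c d
    simp only [Matrix.add_apply, mul_apply, transpose_apply, vecMulVec_apply]
    have hterm : ∀ i : Fin n, fullMatrix 𝒮 Z (Xt t) i c * fullMatrix 𝒮 Z (Xt t) i d =
        L0 i c * L0 i d + (if i = i0 then w t c * w t d else 0) := by
      intro i
      by_cases hi : i = i0
      · subst hi
        simp only [hL0, updateRow_self, Pi.zero_apply, if_pos rfl, zero_mul, zero_add]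
        rfl
      · simp only [hL0, updateRow_ne hi, hrow t i hi, if_neg hi, add_zero]
    rw [Finset.sum_congr rfl fun i _ => hterm i, Finset.sum_add_distrib]
    simp only [Finset.sum_ite_eq' Finset.univ i0, Finset.mem_univ, if_true]
    ring
  have hPSD : (C + L0ᵀ * L0).PosSemidef := by
    have h1 : (L0ᴴ * L0).PosSemidef := posSemidef_conjTranspose_mul_self L0
    rw [conjTranspose_eq_transpose_of_trivial] at h1
    exact hC.add h1
  have hXeq : X = Xt (X i0 j0) := by
    simp [hXt, Function.update_eq_self, updateRow_eq_self]
  have key := det_psd_quad (C + L0ᵀ * L0) hPSD a bb (X i0 j0) (hX i0 j0)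
  have hobj : ∀ t : ℝ, ((fullMatrix 𝒮 Z (Xt t))ᵀ * fullMatrix 𝒮 Z (Xt t) + C).det =
      ((C + L0ᵀ * L0) + vecMulVec (a + t • bb) (a + t • bb)).det := by
    intro t; rw [hdecomp t, hw t]
  have hstart : ((fullMatrix 𝒮 Z X)ᵀ * fullMatrix 𝒮 Z X + C).det =
      ((C + L0ᵀ * L0) + vecMulVec (a + (X i0 j0) • bb) (a + (X i0 j0) • bb)).det := by
    conv_lhs => rw [hXeq]
    exact hobj (X i0 j0)
  have hmem : ∀ (s : ℝ), s ∈ Set.Icc (-1:ℝ) 1 → ∀ i j, Xt s i j ∈ Set.Icc (-1:ℝ) 1 := by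
    intro s hs i j
    by_cases hi : i = i0
    · subst hi
      rw [hXtrow]
      by_cases hj : j = j0
      · subst hj; simp [hs]
      · rw [Function.update_of_ne hj]; exact hX _ j
    · simp only [hXt, updateRow_ne hi]; exact hX i j
  have hoff : ∀ (s : ℝ) i j, (i ≠ i0 ∨ j ≠ j0) → Xt s i j = X i j := by
    intro s i j hij
    by_cases hi : i = i0
    · subst hi
      rcases hij with h | h
      · exact absurd rfl h
      · rw [hXtrow, Function.update_of_ne h]
    · simp [hXt, updateRow_ne hi]
  have hdiag : ∀ s : ℝ, Xt s i0 j0 = s := by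
    intro s; rw [hXtrow]; simp
  rcases le_max_iff.mp key with h | h
  · refine ⟨Xt (-1), hmem (-1) (by norm_num), Or.inl (hdiag (-1)), hoff (-1), ?_⟩
    rw [hstart, hobj (-1)]
    exact h
  · refine ⟨Xt 1, hmem 1 (by norm_num), Or.inr (hdiag 1), hoff 1, ?_⟩
    rw [hstart, hobj 1]
    exact h

end Step

/-- Theorem 1 of the paper: for any `m`-factor interaction model there exists a
design all of whose coordinates equal `±1` maximizing the (Bayesian) `D`-criterion. -/
theorem stmt0 (n k m b : ℕ) (hn : 0 < n) (hk : 0 < k) (hm : 0 < m) (hmk : m ≤ k)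
    (hb : 0 < b)
    (𝒮 : Finset (Finset (Fin k)))
    (hsingle : ∀ j : Fin k, {j} ∈ 𝒮)
    (hS : ∀ S ∈ 𝒮, S.Nonempty ∧ S.card ≤ m)
    (hmax : ∃ S ∈ 𝒮, S.card = m)
    (Z : Matrix (Fin n) (Fin b) ℝ)
    (C : Matrix ({S // S ∈ 𝒮} ⊕ Fin b) ({S // S ∈ 𝒮} ⊕ Fin b) ℝ)
    (hC : C.PosSemidef)
    (X : Matrix (Fin n) (Fin k) ℝ)
    (hX : ∀ i j, X i j ∈ Set.Icc (-1 : ℝ) 1) :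
    ∃ Y : Matrix (Fin n) (Fin k) ℝ,
      (∀ i j, Y i j = -1 ∨ Y i j = 1) ∧
      ((fullMatrix 𝒮 Z X)ᵀ * fullMatrix 𝒮 Z X + C).det ≤
        ((fullMatrix 𝒮 Z Y)ᵀ * fullMatrix 𝒮 Z Y + C).det := by
  classical
  have main : ∀ s : Finset (Fin n × Fin k), ∃ Y : Matrix (Fin n) (Fin k) ℝ,
      (∀ i j, Y i j ∈ Set.Icc (-1:ℝ) 1) ∧
      (∀ p ∈ s, Y p.1 p.2 = -1 ∨ Y p.1 p.2 = 1) ∧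
      ((fullMatrix 𝒮 Z X)ᵀ * fullMatrix 𝒮 Z X + C).det ≤
        ((fullMatrix 𝒮 Z Y)ᵀ * fullMatrix 𝒮 Z Y + C).det := by
    intro s
    induction s using Finset.induction_on with
    | empty => exact ⟨X, hX, by simp, le_refl _⟩
    | @insert p s hp ih =>
      obtain ⟨Y, hY1, hY2, hY3⟩ := ih
      obtain ⟨Y', h1, h2, h3, h4⟩ := step 𝒮 Z C hC Y hY1 p.1 p.2
      refine ⟨Y', h1, ?_, le_trans hY3 h4⟩
      intro q hq
      rcases Finset.mem_insert.mp hq with rfl | hq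
      · exact h2
      · by_cases hcase : q.1 ≠ p.1 ∨ q.2 ≠ p.2
        · rw [h3 q.1 q.2 hcase]
          exact hY2 q hq
        · push_neg at hcase
          have : q = p := Prod.ext hcase.1 hcase.2
          rw [this]
          exact h2
  obtain ⟨Y, _, hY2, hY3⟩ := main Finset.univ
  exact ⟨Y, fun i j => hY2 (i, j) (Finset.mem_univ _), hY3⟩
end

section
/- Assume ZᵀZ is invertible and let P_Z = Z(ZᵀZ)⁻¹Zᵀ. For every n×k real matrix X all of whose entries lie in [−1,1], there exists an n×k matrix Y all of whose entries lie in {−1,1} such that det(F(Y)ᵀ(I−P_Z)F(Y) + C_F) ≥ det(F(X)ᵀ(I−P_Z)F(X) + C_F). (This is Theorem 1 of the paper for the D_s- and Bayesian D_s-criteria: there exists an optimal design all of whose coordinates equal ±1.) -/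
open Matrix

/-- Update a single entry of a matrix. -/
def updEntry {n k : ℕ} (X : Matrix (Fin n) (Fin k) ℝ) (i : Fin n) (j : Fin k) (t : ℝ) :
    Matrix (Fin n) (Fin k) ℝ :=
  Matrix.of fun i' j' => if i' = i ∧ j' = j then t else X i' j'

/-- A determinant of a base matrix plus a rank-two update of the given special
quadratic-in-`t` shape is a quadratic polynomial in `t`. -/
lemma det_quad {ι : Type*} [Fintype ι] [DecidableEq ι]
    (H0 : Matrix ι ι ℝ) (hH0 : IsUnit H0.det) (r a₁ a₂ : ι → ℝ) (c : ℝ) :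
    ∃ α β γ : ℝ, ∀ t : ℝ,
      (H0 + t • vecMulVec r a₁ + t • vecMulVec a₂ r + (c * t ^ 2) • vecMulVec r r).det
        = α + β * t + γ * t ^ 2 := by
  classical
  set U : Matrix ι (Fin 2) ℝ := Matrix.of fun s p => ![r s, a₂ s] p with hU
  set G : Matrix ι (Fin 2) ℝ := H0⁻¹ * U with hG
  set A : Fin 2 → ℝ := fun q => ∑ s, a₁ s * G s q with hA
  set R : Fin 2 → ℝ := fun q => ∑ s, r s * G s q with hR
  refine ⟨H0.det, H0.det * (A 0 + R 1), H0.det * (A 0 * R 1 + c * R 0 - A 1 * R 0),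
    fun t => ?_⟩
  set V : Matrix ι (Fin 2) ℝ :=
    Matrix.of fun s p => ![t * a₁ s + (c * t ^ 2) * r s, t * r s] p with hV
  have hM : H0 + t • vecMulVec r a₁ + t • vecMulVec a₂ r + (c * t ^ 2) • vecMulVec r r
      = H0 + U * Vᵀ := by
    ext s s'
    simp only [Matrix.add_apply, Matrix.smul_apply, vecMulVec_apply, Matrix.mul_apply,
      Fin.sum_univ_two, Matrix.transpose_apply, hU, hV, Matrix.of_apply,
      Matrix.cons_val_zero, Matrix.cons_val_one, Matrix.head_cons, smul_eq_mul]
    ring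
  have hkey : H0 + U * Vᵀ = H0 * (1 + G * Vᵀ) := by
    rw [Matrix.mul_add, Matrix.mul_one, hG, ← Matrix.mul_assoc, ← Matrix.mul_assoc,
      Matrix.mul_nonsing_inv _ hH0, Matrix.one_mul]
  rw [hM, hkey, det_mul, Matrix.det_one_add_mul_comm]
  set K : Matrix (Fin 2) (Fin 2) ℝ := 1 + Vᵀ * G with hK
  rw [Matrix.det_fin_two]
  have hsum : ∀ p q, (Vᵀ * G) p q = ∑ s, V s p * G s q := by
    intro p q
    simp [Matrix.mul_apply]
  have hVs0 : ∀ s, V s 0 = t * a₁ s + (c * t ^ 2) * r s := fun s => rfl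
  have hVs1 : ∀ s, V s 1 = t * r s := fun s => rfl
  have hsplit0 : ∀ q, ∑ s, V s 0 * G s q = t * A q + (c * t ^ 2) * R q := by
    intro q
    simp only [hVs0, hA, hR]
    rw [Finset.mul_sum, Finset.mul_sum, ← Finset.sum_add_distrib]
    exact Finset.sum_congr rfl fun s _ => by ring
  have hsplit1 : ∀ q, ∑ s, V s 1 * G s q = t * R q := by
    intro q
    simp only [hVs1, hR]
    rw [Finset.mul_sum]
    exact Finset.sum_congr rfl fun s _ => by ring
  have e00 : K 0 0 = 1 + (t * A 0 + (c * t ^ 2) * R 0) := by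
    rw [hK, Matrix.add_apply, Matrix.one_apply_eq, hsum, hsplit0]
  have e01 : K 0 1 = t * A 1 + (c * t ^ 2) * R 1 := by
    rw [hK, Matrix.add_apply, Matrix.one_apply_ne (by decide), hsum, hsplit0, zero_add]
  have e10 : K 1 0 = t * R 0 := by
    rw [hK, Matrix.add_apply, Matrix.one_apply_ne (by decide), hsum, hsplit1, zero_add]
  have e11 : K 1 1 = 1 + t * R 1 := by
    rw [hK, Matrix.add_apply, Matrix.one_apply_eq, hsum, hsplit1]
  rw [e00, e01, e10, e11]
  ring

/-- A quadratic polynomial that is nonnegative everywhere attains its maximum on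
`[-1, 1]` at one of the endpoints. -/
lemma quad_bound {α β γ : ℝ} (h : ∀ t : ℝ, 0 ≤ α + β * t + γ * t ^ 2) {t : ℝ}
    (h1 : -1 ≤ t) (h2 : t ≤ 1) :
    α + β * t + γ * t ^ 2
      ≤ max (α + β * (-1) + γ * (-1) ^ 2) (α + β * 1 + γ * 1 ^ 2) := by
  have hγ : 0 ≤ γ := by
    by_contra hγ
    push_neg at hγ
    set T : ℝ := max 1 ((|α| + |β| + 1) / (-γ)) with hT
    have hT1 : (1 : ℝ) ≤ T := le_max_left _ _
    have hT2 : (|α| + |β| + 1) / (-γ) ≤ T := le_max_right _ _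
    have hγ' : 0 < -γ := by linarith
    have hTb : |α| + |β| + 1 ≤ T * (-γ) := (div_le_iff₀ hγ').mp hT2
    have hht := h T
    nlinarith [le_abs_self α, le_abs_self β, neg_abs_le α, neg_abs_le β,
      abs_nonneg α, abs_nonneg β, mul_le_mul_of_nonneg_left hTb (le_trans zero_le_one hT1)]
  have ht2 : t ^ 2 ≤ 1 := by nlinarith
  have hγt : γ * t ^ 2 ≤ γ * 1 := mul_le_mul_of_nonneg_left ht2 hγ
  rcases le_total 0 β with hβ | hβ
  · refine le_trans ?_ (le_max_right _ _)
    have : β * t ≤ β * 1 := mul_le_mul_of_nonneg_left h2 hβ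
    nlinarith
  · refine le_trans ?_ (le_max_left _ _)
    have : β * t ≤ β * (-1) := mul_le_mul_of_nonpos_left h1 hβ
    nlinarith

lemma updEntry_apply {n k : ℕ} (X : Matrix (Fin n) (Fin k) ℝ) (i : Fin n) (j : Fin k)
    (t : ℝ) (i' : Fin n) (j' : Fin k) :
    updEntry X i j t i' j' = if i' = i ∧ j' = j then t else X i' j' := rfl

lemma updEntry_self {n k : ℕ} (X : Matrix (Fin n) (Fin k) ℝ) (i : Fin n) (j : Fin k) :
    updEntry X i j (X i j) = X := by
  ext i' j'
  rw [updEntry_apply]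
  split_ifs with h
  · rw [h.1, h.2]
  · rfl

/-- One-step lemma: changing a single entry of a design in `[-1,1]` to `-1` or `1`
does not decrease the criterion. -/
lemma one_step {n k : ℕ} (𝒮 : Finset (Finset (Fin k)))
    (M : Matrix (Fin n) (Fin n) ℝ) (hM : M.PosSemidef)
    (CF : Matrix {S // S ∈ 𝒮} {S // S ∈ 𝒮} ℝ) (hCF : CF.PosSemidef)
    (X : Matrix (Fin n) (Fin k) ℝ) (i : Fin n) (j : Fin k)
    (ht1 : -1 ≤ X i j) (ht2 : X i j ≤ 1) :
    ((modelMatrix 𝒮 X)ᵀ * M * modelMatrix 𝒮 X + CF).det ≤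
      max ((modelMatrix 𝒮 (updEntry X i j (-1)))ᵀ * M
            * modelMatrix 𝒮 (updEntry X i j (-1)) + CF).det
          ((modelMatrix 𝒮 (updEntry X i j 1))ᵀ * M
            * modelMatrix 𝒮 (updEntry X i j 1) + CF).det := by
  classical
  set F : ℝ → Matrix (Fin n) {S // S ∈ 𝒮} ℝ := fun t => modelMatrix 𝒮 (updEntry X i j t)
    with hFdef
  set e : Fin n → ℝ := fun i' => if i' = i then 1 else 0 with he
  set r : {S // S ∈ 𝒮} → ℝ :=
    fun S => if j ∈ S.1 then ∏ j' ∈ S.1.erase j, X i j' else 0 with hr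
  set A : Matrix (Fin n) {S // S ∈ 𝒮} ℝ :=
    Matrix.of (fun i' S => if i' = i ∧ j ∈ S.1 then 0 else ∏ j' ∈ S.1, X i' j') with hAdef
  -- structure of the model matrix as an affine function of the entry
  have hF : ∀ t : ℝ, F t = A + t • vecMulVec e r := by
    intro t
    ext i' S
    simp only [hFdef, modelMatrix, Matrix.of_apply, Matrix.add_apply, Matrix.smul_apply,
      vecMulVec_apply, smul_eq_mul, updEntry_apply, hAdef, he, hr]
    by_cases hi : i' = i
    · subst hi
      by_cases hj : j ∈ S.1
      · rw [← Finset.mul_prod_erase _ _ hj]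
        have hrest : ∏ j' ∈ S.1.erase j, (if i' = i' ∧ j' = j then t else X i' j')
            = ∏ j' ∈ S.1.erase j, X i' j' :=
          Finset.prod_congr rfl fun j' hj' => if_neg (by
            simp [(Finset.mem_erase.mp hj').1])
        rw [hrest]
        simp [hj]
      · have hrest : ∏ j' ∈ S.1, (if i' = i' ∧ j' = j then t else X i' j')
            = ∏ j' ∈ S.1, X i' j' :=
          Finset.prod_congr rfl fun j' hj' => if_neg (by
            rintro ⟨-, rfl⟩; exact hj hj')
        rw [hrest]
        simp [hj]
    · have hrest : ∏ j' ∈ S.1, (if i' = i ∧ j' = j then t else X i' j')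
          = ∏ j' ∈ S.1, X i' j' :=
        Finset.prod_congr rfl fun j' _ => if_neg (by rintro ⟨h, -⟩; exact hi h)
      rw [hrest]
      simp [hi]
  set a₁ : {S // S ∈ 𝒮} → ℝ := fun T => (M * A) i T with ha₁
  set a₂ : {S // S ∈ 𝒮} → ℝ := fun S => (Aᵀ * M) S i with ha₂
  set c : ℝ := M i i with hc
  -- products with the rank-one matrix `vecMulVec e r`
  have hvt : (vecMulVec e r)ᵀ * M = vecMulVec r (fun x => M i x) := by
    ext S x
    simp only [Matrix.mul_apply, Matrix.transpose_apply, vecMulVec_apply, he, ite_mul,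
      one_mul, zero_mul]
    simp [Finset.sum_ite_eq']
  have h1 : (vecMulVec e r)ᵀ * M * A = vecMulVec r a₁ := by
    rw [hvt]
    ext S T
    rw [Matrix.mul_apply]
    simp only [vecMulVec_apply, ha₁, Matrix.mul_apply]
    rw [Finset.mul_sum]
    exact Finset.sum_congr rfl fun x _ => by ring
  have h2 : Aᵀ * M * vecMulVec e r = vecMulVec a₂ r := by
    ext S T
    rw [Matrix.mul_apply]
    simp only [vecMulVec_apply, he, mul_ite, mul_one, mul_zero, ite_mul, zero_mul]
    simp [Finset.sum_ite_eq', ha₂]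
  have h3 : (vecMulVec e r)ᵀ * M * vecMulVec e r = c • vecMulVec r r := by
    rw [hvt]
    ext S T
    rw [Matrix.mul_apply]
    simp only [vecMulVec_apply, he, mul_ite, mul_one, mul_zero, ite_mul, zero_mul]
    simp only [Finset.sum_ite_eq', Finset.mem_univ, if_pos]
    simp only [Matrix.smul_apply, vecMulVec_apply, smul_eq_mul, hc]
    ring
  -- the quadratic expansion of the objective matrix
  have expand : ∀ t : ℝ, (A + t • vecMulVec e r)ᵀ * M * (A + t • vecMulVec e r)
      = Aᵀ * M * A + t • ((vecMulVec e r)ᵀ * M * A) + t • (Aᵀ * M * vecMulVec e r)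
        + (t * t) • ((vecMulVec e r)ᵀ * M * vecMulVec e r) := by
    intro t
    simp only [Matrix.transpose_add, Matrix.transpose_smul, Matrix.add_mul, Matrix.mul_add,
      Matrix.smul_mul, Matrix.mul_smul, smul_smul, smul_add]
    abel
  -- main bound for the regularized objective
  have main : ∀ ε : ℝ, 0 < ε →
      ((F (X i j))ᵀ * M * F (X i j) + CF + ε • 1).det
        ≤ max ((F (-1))ᵀ * M * F (-1) + CF + ε • 1).det
              ((F 1)ᵀ * M * F 1 + CF + ε • 1).det := by
    intro ε hε
    set H0 : Matrix {S // S ∈ 𝒮} {S // S ∈ 𝒮} ℝ := Aᵀ * M * A + CF + ε • 1 with hH0def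
    have hconj : ∀ {p q : Type} (W : Matrix p q ℝ), Wᴴ = Wᵀ := by
      intro p q W
      ext a b
      simp [Matrix.conjTranspose_apply]
    have hAMA : (Aᵀ * M * A).PosSemidef := by
      have := hM.conjTranspose_mul_mul_same A
      rwa [hconj] at this
    have hone : ((ε : ℝ) • (1 : Matrix {S // S ∈ 𝒮} {S // S ∈ 𝒮} ℝ)).PosDef := by
      rw [Matrix.smul_one_eq_diagonal]
      exact Matrix.PosDef.diagonal fun _ => hε
    have hH0pd : H0.PosDef := Matrix.PosDef.posSemidef_add (hAMA.add hCF) hone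
    have hH0unit : IsUnit H0.det := isUnit_iff_ne_zero.mpr (ne_of_gt hH0pd.det_pos)
    have hexp : ∀ t : ℝ, (F t)ᵀ * M * F t + CF + ε • 1
        = H0 + t • vecMulVec r a₁ + t • vecMulVec a₂ r + (c * t ^ 2) • vecMulVec r r := by
      intro t
      rw [hF t, expand t, h1, h2, h3, smul_smul]
      rw [hH0def]
      have : t * t * c = c * t ^ 2 := by ring
      rw [this]
      abel
    obtain ⟨α, β, γ, hq⟩ := det_quad H0 hH0unit r a₁ a₂ c
    have hval : ∀ t : ℝ, ((F t)ᵀ * M * F t + CF + ε • 1).det = α + β * t + γ * t ^ 2 := by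
      intro t
      rw [hexp t, hq t]
    have hnonneg : ∀ t : ℝ, 0 ≤ α + β * t + γ * t ^ 2 := by
      intro t
      rw [← hval t]
      have hpsd : ((F t)ᵀ * M * F t + CF + ε • 1).PosDef := by
        have hFt : ((F t)ᵀ * M * F t).PosSemidef := by
          have := hM.conjTranspose_mul_mul_same (F t)
          rwa [hconj] at this
        exact Matrix.PosDef.posSemidef_add (hFt.add hCF) hone
      exact hpsd.det_pos.le
    rw [hval (X i j), hval (-1), hval 1]
    exact quad_bound hnonneg ht1 ht2
  -- pass to the limit ε → 0⁺
  have hcont : ∀ t : ℝ, Filter.Tendsto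
      (fun ε : ℝ => ((F t)ᵀ * M * F t + CF + ε • 1).det)
      (nhdsWithin 0 (Set.Ioi 0)) (nhds (((F t)ᵀ * M * F t + CF).det)) := by
    intro t
    have hc : Continuous fun ε : ℝ => ((F t)ᵀ * M * F t + CF + ε • 1).det := by
      apply Continuous.matrix_det
      exact continuous_const.add (continuous_id.smul continuous_const)
    have := (hc.tendsto 0).mono_left (nhdsWithin_le_nhds (s := Set.Ioi (0:ℝ)))
    simpa using this
  have hfinal : ((F (X i j))ᵀ * M * F (X i j) + CF).det
      ≤ max ((F (-1))ᵀ * M * F (-1) + CF).det ((F 1)ᵀ * M * F 1 + CF).det := by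
    refine le_of_tendsto_of_tendsto (hcont (X i j)) ((hcont (-1)).max (hcont 1)) ?_
    filter_upwards [self_mem_nhdsWithin] with ε hε
    exact main ε hε
  have hXX : F (X i j) = modelMatrix 𝒮 X := by
    simp only [hFdef, updEntry_self]
  rw [hXX] at hfinal
  simpa only [hFdef] using hfinal

/-- Theorem 1 of the paper for the `D_s`- and Bayesian `D_s`-criteria: there exists an
optimal design all of whose coordinates equal `±1`. -/
theorem stmt1 (n k m b : ℕ) (hn : 0 < n) (hk : 0 < k) (hm : 0 < m) (hmk : m ≤ k)
    (hb : 0 < b)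
    (𝒮 : Finset (Finset (Fin k)))
    (hsingle : ∀ j : Fin k, {j} ∈ 𝒮)
    (hS : ∀ S ∈ 𝒮, S.Nonempty ∧ S.card ≤ m)
    (hmax : ∃ S ∈ 𝒮, S.card = m)
    (Z : Matrix (Fin n) (Fin b) ℝ)
    (hZ : IsUnit (Zᵀ * Z))
    (CF : Matrix {S // S ∈ 𝒮} {S // S ∈ 𝒮} ℝ)
    (hCF : CF.PosSemidef)
    (X : Matrix (Fin n) (Fin k) ℝ)
    (hX : ∀ i j, X i j ∈ Set.Icc (-1 : ℝ) 1) :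
    ∃ Y : Matrix (Fin n) (Fin k) ℝ,
      (∀ i j, Y i j = -1 ∨ Y i j = 1) ∧
      ((modelMatrix 𝒮 X)ᵀ * (1 - Z * (Zᵀ * Z)⁻¹ * Zᵀ) * modelMatrix 𝒮 X + CF).det ≤
        ((modelMatrix 𝒮 Y)ᵀ * (1 - Z * (Zᵀ * Z)⁻¹ * Zᵀ) * modelMatrix 𝒮 Y + CF).det := by
  classical
  set M : Matrix (Fin n) (Fin n) ℝ := 1 - Z * (Zᵀ * Z)⁻¹ * Zᵀ with hMdef
  have hdet : IsUnit (Zᵀ * Z).det := (Matrix.isUnit_iff_isUnit_det _).mp hZ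
  have hPP : Z * (Zᵀ * Z)⁻¹ * Zᵀ * (Z * (Zᵀ * Z)⁻¹ * Zᵀ) = Z * (Zᵀ * Z)⁻¹ * Zᵀ := by
    have h1 : Zᵀ * (Z * ((Zᵀ * Z)⁻¹ * Zᵀ)) = (Zᵀ * Z) * ((Zᵀ * Z)⁻¹ * Zᵀ) := by
      rw [← Matrix.mul_assoc]
    calc Z * (Zᵀ * Z)⁻¹ * Zᵀ * (Z * (Zᵀ * Z)⁻¹ * Zᵀ)
        = Z * ((Zᵀ * Z)⁻¹ * (Zᵀ * (Z * ((Zᵀ * Z)⁻¹ * Zᵀ)))) := by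
          simp only [Matrix.mul_assoc]
      _ = Z * ((Zᵀ * Z)⁻¹ * ((Zᵀ * Z) * ((Zᵀ * Z)⁻¹ * Zᵀ))) := by rw [h1]
      _ = Z * ((Zᵀ * Z)⁻¹ * ((Zᵀ * Z) * (Zᵀ * Z)⁻¹ * Zᵀ)) := by
          simp only [Matrix.mul_assoc]
      _ = Z * ((Zᵀ * Z)⁻¹ * Zᵀ) := by rw [Matrix.mul_nonsing_inv _ hdet, Matrix.one_mul]
      _ = Z * (Zᵀ * Z)⁻¹ * Zᵀ := by rw [Matrix.mul_assoc]
  have hsymm : Mᵀ = M := by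
    rw [hMdef]
    rw [Matrix.transpose_sub, Matrix.transpose_one]
    congr 1
    rw [Matrix.transpose_mul, Matrix.transpose_mul, Matrix.transpose_transpose,
      Matrix.transpose_nonsing_inv, Matrix.transpose_mul, Matrix.transpose_transpose,
      Matrix.mul_assoc]
  have hidem : M * M = M := by
    rw [hMdef]
    simp only [Matrix.sub_mul, Matrix.mul_sub, Matrix.one_mul, Matrix.mul_one]
    rw [hPP]
    abel
  have hMpsd : M.PosSemidef := by
    have hconj : Mᴴ = Mᵀ := by
      ext a b
      simp [Matrix.conjTranspose_apply]
    have hMM : M = Mᴴ * M := by rw [hconj, hsymm, hidem]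
    rw [hMM]
    exact Matrix.posSemidef_conjTranspose_mul_self M
  -- induction over the set of positions to be pushed to ±1
  have key : ∀ s : Finset (Fin n × Fin k), ∀ W : Matrix (Fin n) (Fin k) ℝ,
      (∀ i j, W i j ∈ Set.Icc (-1 : ℝ) 1) →
      ∃ Y : Matrix (Fin n) (Fin k) ℝ,
        (∀ i j, Y i j ∈ Set.Icc (-1 : ℝ) 1) ∧
        (∀ p ∈ s, Y p.1 p.2 = -1 ∨ Y p.1 p.2 = 1) ∧
        ((modelMatrix 𝒮 W)ᵀ * M * modelMatrix 𝒮 W + CF).det ≤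
          ((modelMatrix 𝒮 Y)ᵀ * M * modelMatrix 𝒮 Y + CF).det := by
    intro s
    induction s using Finset.induction_on with
    | empty =>
      intro W hW
      exact ⟨W, hW, by simp, le_refl _⟩
    | @insert p s hp ih =>
      intro W hW
      obtain ⟨Y, hY1, hY2, hY3⟩ := ih W hW
      have hstep := one_step 𝒮 M hMpsd CF hCF Y p.1 p.2 (hY1 p.1 p.2).1 (hY1 p.1 p.2).2
      have hbnd : ∀ c0 : ℝ, c0 = -1 ∨ c0 = 1 →
          (∀ i j, updEntry Y p.1 p.2 c0 i j ∈ Set.Icc (-1 : ℝ) 1) ∧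
          (∀ q ∈ insert p s, updEntry Y p.1 p.2 c0 q.1 q.2 = -1 ∨
            updEntry Y p.1 p.2 c0 q.1 q.2 = 1) := by
        intro c0 hc0
        constructor
        · intro i j
          rw [updEntry_apply]
          split_ifs with h
          · rcases hc0 with rfl | rfl
            · exact ⟨le_refl _, by norm_num⟩
            · exact ⟨by norm_num, le_refl _⟩
          · exact hY1 i j
        · intro q hq
          rw [updEntry_apply]
          split_ifs with h
          · exact hc0
          · rcases Finset.mem_insert.mp hq with rfl | hq'
            · exact absurd ⟨rfl, rfl⟩ h
            · exact hY2 q hq'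
      rcases max_cases
          ((modelMatrix 𝒮 (updEntry Y p.1 p.2 (-1)))ᵀ * M
            * modelMatrix 𝒮 (updEntry Y p.1 p.2 (-1)) + CF).det
          ((modelMatrix 𝒮 (updEntry Y p.1 p.2 1))ᵀ * M
            * modelMatrix 𝒮 (updEntry Y p.1 p.2 1) + CF).det with
        ⟨hmx, _⟩ | ⟨hmx, _⟩
      · refine ⟨updEntry Y p.1 p.2 (-1), (hbnd (-1) (Or.inl rfl)).1,
          (hbnd (-1) (Or.inl rfl)).2, hY3.trans ?_⟩
        rw [hmx] at hstep
        exact hstep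
      · refine ⟨updEntry Y p.1 p.2 1, (hbnd 1 (Or.inr rfl)).1,
          (hbnd 1 (Or.inr rfl)).2, hY3.trans ?_⟩
        rw [hmx] at hstep
        exact hstep
  obtain ⟨Y, _, hY2, hY3⟩ := key Finset.univ X hX
  exact ⟨Y, fun i j => hY2 (i, j) (Finset.mem_univ _), hY3⟩
end

section
/- Suppose X* has all entries in [−1,1] and maximizes the map X ↦ det(L(X)ᵀL(X) + C) over all n×k matrices with entries in [−1,1], and suppose −1 < X*_{i₀j₀} < 1 for some row i₀ and column j₀. Then for every t ∈ [−1,1], the matrix X*(t) obtained from X* by replacing its (i₀,j₀) entry with t satisfies det(L(X*(t))ᵀL(X*(t)) + C) = det(L(X*)ᵀL(X*) + C); in particular every such X*(t) also maximizes the criterion. (This is Corollary 1 of the paper: if an optimal design for one of the 𝒟-criteria has a coordinate strictly inside (−1,1), then the criterion is constant under any exchange of that coordinate, so there are infinitely many optimal designs.) -/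
open Matrix Polynomial Filter Topology

lemma my_det_lemma_unit {p : Type*} [Fintype p] [DecidableEq p] {A : Matrix p p ℝ}
    (hA : IsUnit A.det) (u v : p → ℝ) :
    (A + replicateCol Unit u * replicateRow Unit v).det = A.det + v ⬝ᵥ A.adjugate *ᵥ u := by
  rw [Matrix.det_add_replicateCol_mul_replicateRow hA u v,
    Matrix.det_unique ((1 + replicateRow Unit v * A⁻¹ * replicateCol Unit u : Matrix Unit Unit ℝ))]
  have h1 : (1 + replicateRow Unit v * A⁻¹ * replicateCol Unit u : Matrix Unit Unit ℝ) default default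
      = 1 + v ⬝ᵥ A⁻¹ *ᵥ u := by
    simp only [Matrix.mul_apply, Matrix.mulVec, dotProduct, Finset.mul_sum,
      Finset.sum_mul, mul_assoc, Matrix.add_apply, Matrix.one_apply_eq, Matrix.replicateRow_apply,
      Matrix.replicateCol_apply, Finset.univ_unique, Finset.sum_singleton]
    rw [Finset.sum_comm]
  rw [h1, Matrix.inv_def]
  have h2 : v ⬝ᵥ (Ring.inverse A.det • A.adjugate) *ᵥ u
      = Ring.inverse A.det * (v ⬝ᵥ A.adjugate *ᵥ u) := by
    simp [Matrix.smul_mulVec]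
  rw [h2, mul_add, mul_one]
  congr 1
  rw [← mul_assoc, Ring.mul_inverse_cancel _ hA, one_mul]

lemma my_det_lemma {p : Type*} [Fintype p] [DecidableEq p] (A : Matrix p p ℝ) (u v : p → ℝ) :
    (A + replicateCol Unit u * replicateRow Unit v).det = A.det + v ⬝ᵥ A.adjugate *ᵥ u := by
  classical
  set P : ℝ[X] := Matrix.det ((X : ℝ[X]) • (1 : Matrix p p ℝ[X]) + A.map C) with hPdef
  have hPlc : P.leadingCoeff = 1 := Polynomial.leadingCoeff_det_X_one_add_C A
  have hP0 : P ≠ 0 := by intro h; rw [h] at hPlc; simp at hPlc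
  have heval : ∀ ε : ℝ, P.eval ε = (ε • (1 : Matrix p p ℝ) + A).det := by
    intro ε
    rw [hPdef, ← Polynomial.coe_evalRingHom, RingHom.map_det]
    congr 1
    ext i j
    by_cases h : i = j <;>
      simp [Matrix.map_apply, Matrix.one_apply, h]
  have hroots : {x : ℝ | P.IsRoot x}.Finite := P.finite_setOf_isRoot hP0
  set f : ℝ → ℝ := fun ε => (ε • (1 : Matrix p p ℝ) + A + replicateCol Unit u * replicateRow Unit v).det with hf
  set g : ℝ → ℝ := fun ε =>
    (ε • (1 : Matrix p p ℝ) + A).det + v ⬝ᵥ (ε • (1 : Matrix p p ℝ) + A).adjugate *ᵥ u with hg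
  have hfg : ∀ ε : ℝ, ¬ P.IsRoot ε → f ε = g ε := by
    intro ε hε
    have hU : IsUnit (ε • (1 : Matrix p p ℝ) + A).det := by
      rw [← heval ε]
      exact isUnit_iff_ne_zero.mpr hε
    exact my_det_lemma_unit hU u v
  have hcont : Continuous fun ε : ℝ => ε • (1 : Matrix p p ℝ) + A :=
    (continuous_id.smul continuous_const).add continuous_const
  have hfc : Continuous f := hcont.add continuous_const |>.matrix_det
  have hgc : Continuous g :=
    hcont.matrix_det.add ((continuous_const.dotProduct
      (hcont.matrix_adjugate.matrix_mulVec continuous_const)))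
  have hEv : ∀ᶠ ε in 𝓝[≠] (0 : ℝ), f ε = g ε := by
    have hclosed : IsClosed ({x : ℝ | P.IsRoot x} \ {0}) :=
      (hroots.subset Set.diff_subset).isClosed
    have h0 : (0 : ℝ) ∉ {x : ℝ | P.IsRoot x} \ {0} := by simp
    have hnb : ({x : ℝ | P.IsRoot x} \ {0})ᶜ ∈ 𝓝 (0 : ℝ) :=
      hclosed.isOpen_compl.mem_nhds h0
    filter_upwards [nhdsWithin_le_nhds hnb, self_mem_nhdsWithin] with ε h1 h2
    apply hfg
    intro hr
    exact h1 ⟨hr, h2⟩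
  have h1 : Tendsto f (𝓝[≠] (0 : ℝ)) (𝓝 (f 0)) :=
    (hfc.tendsto 0).mono_left nhdsWithin_le_nhds
  have h2 : Tendsto g (𝓝[≠] (0 : ℝ)) (𝓝 (g 0)) :=
    (hgc.tendsto 0).mono_left nhdsWithin_le_nhds
  have := tendsto_nhds_unique (h1.congr' hEv) h2
  simpa [hf, hg] using this

lemma my_adjugate_psd {p : Type*} [Fintype p] [DecidableEq p] {B : Matrix p p ℝ}
    (hB : B.PosSemidef) : B.adjugate.PosSemidef := by
  obtain ⟨N, rfl⟩ : ∃ N : Matrix p p ℝ, B = Nᴴ * N := by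
    open MatrixOrder in exact CStarAlgebra.nonneg_iff_eq_star_mul_self.mp hB.nonneg
  rw [Matrix.adjugate_mul_distrib]
  have : (adjugate Nᴴ) = (adjugate N)ᴴ := by
    rw [Matrix.conjTranspose_eq_transpose_of_trivial, Matrix.conjTranspose_eq_transpose_of_trivial,
      Matrix.adjugate_transpose]
  rw [this]
  exact Matrix.posSemidef_self_mul_conjTranspose _

/-- The design `X` with its `(i₀, j₀)` entry replaced by `t`. -/
def updateEntry {n k : ℕ} (X : Matrix (Fin n) (Fin k) ℝ) (i₀ : Fin n) (j₀ : Fin k)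
    (t : ℝ) : Matrix (Fin n) (Fin k) ℝ :=
  Matrix.of fun i j => if i = i₀ ∧ j = j₀ then t else X i j

/-- Corollary 1 of the paper: if an optimal design for one of the `𝒟`-criteria has a
coordinate strictly inside `(-1, 1)`, then the criterion is constant under any exchange
of that coordinate, so every such exchanged design is also optimal. -/
theorem stmt2 (n k m b : ℕ) (hn : 0 < n) (hk : 0 < k) (hm : 0 < m) (hmk : m ≤ k)
    (hb : 0 < b)
    (𝒮 : Finset (Finset (Fin k)))
    (hsingle : ∀ j : Fin k, {j} ∈ 𝒮)
    (hS : ∀ S ∈ 𝒮, S.Nonempty ∧ S.card ≤ m)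
    (hmax : ∃ S ∈ 𝒮, S.card = m)
    (Z : Matrix (Fin n) (Fin b) ℝ)
    (C : Matrix ({S // S ∈ 𝒮} ⊕ Fin b) ({S // S ∈ 𝒮} ⊕ Fin b) ℝ)
    (hC : C.PosSemidef)
    (Xstar : Matrix (Fin n) (Fin k) ℝ)
    (hXstar : ∀ i j, Xstar i j ∈ Set.Icc (-1 : ℝ) 1)
    (hopt : ∀ X' : Matrix (Fin n) (Fin k) ℝ, (∀ i j, X' i j ∈ Set.Icc (-1 : ℝ) 1) →
      ((fullMatrix 𝒮 Z X')ᵀ * fullMatrix 𝒮 Z X' + C).det ≤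
        ((fullMatrix 𝒮 Z Xstar)ᵀ * fullMatrix 𝒮 Z Xstar + C).det)
    (i₀ : Fin n) (j₀ : Fin k)
    (hint : Xstar i₀ j₀ ∈ Set.Ioo (-1 : ℝ) 1) :
    ∀ t ∈ Set.Icc (-1 : ℝ) 1,
      ((fullMatrix 𝒮 Z (updateEntry Xstar i₀ j₀ t))ᵀ *
          fullMatrix 𝒮 Z (updateEntry Xstar i₀ j₀ t) + C).det =
        ((fullMatrix 𝒮 Z Xstar)ᵀ * fullMatrix 𝒮 Z Xstar + C).det ∧
      ∀ X' : Matrix (Fin n) (Fin k) ℝ, (∀ i j, X' i j ∈ Set.Icc (-1 : ℝ) 1) →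
        ((fullMatrix 𝒮 Z X')ᵀ * fullMatrix 𝒮 Z X' + C).det ≤
          ((fullMatrix 𝒮 Z (updateEntry Xstar i₀ j₀ t))ᵀ *
            fullMatrix 𝒮 Z (updateEntry Xstar i₀ j₀ t) + C).det := by
  classical
  obtain ⟨ht0l, ht0r⟩ := hint
  set t₀ : ℝ := Xstar i₀ j₀ with ht₀def
  set Y0 : Matrix (Fin n) ({S // S ∈ 𝒮} ⊕ Fin b) ℝ :=
    updateRow (fullMatrix 𝒮 Z Xstar) i₀ 0 with hY0
  set B : Matrix ({S // S ∈ 𝒮} ⊕ Fin b) ({S // S ∈ 𝒮} ⊕ Fin b) ℝ := C + Y0ᵀ * Y0 with hB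
  have hBpsd : B.PosSemidef := by
    rw [hB]
    apply hC.add
    have := Matrix.posSemidef_conjTranspose_mul_self Y0
    rwa [Matrix.conjTranspose_eq_transpose_of_trivial] at this
  set a : ({S // S ∈ 𝒮} ⊕ Fin b) → ℝ :=
    Sum.elim (fun S => if j₀ ∈ S.1 then 0 else ∏ j ∈ S.1, Xstar i₀ j) (fun q => Z i₀ q) with ha
  set c : ({S // S ∈ 𝒮} ⊕ Fin b) → ℝ :=
    Sum.elim (fun S => if j₀ ∈ S.1 then ∏ j ∈ S.1.erase j₀, Xstar i₀ j else 0)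
      (fun _ => 0) with hc
  have hrow0 : ∀ (t : ℝ) (i : Fin n), i ≠ i₀ → ∀ p,
      fullMatrix 𝒮 Z (updateEntry Xstar i₀ j₀ t) i p = Y0 i p := by
    intro t i hi p
    have hX : ∀ j, updateEntry Xstar i₀ j₀ t i j = Xstar i j := by
      intro j; simp [updateEntry, hi]
    rw [hY0, Matrix.updateRow_ne hi]
    cases p with
    | inl S => simp [fullMatrix, modelMatrix, Matrix.fromCols, hX]
    | inr q => simp [fullMatrix, Matrix.fromCols]
  have hentry : ∀ (t : ℝ) (p : {S // S ∈ 𝒮} ⊕ Fin b),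
      fullMatrix 𝒮 Z (updateEntry Xstar i₀ j₀ t) i₀ p = a p + t * c p := by
    intro t p
    have hXi : ∀ j, updateEntry Xstar i₀ j₀ t i₀ j = if j = j₀ then t else Xstar i₀ j := by
      intro j; simp [updateEntry]
    cases p with
    | inr q => simp [fullMatrix, Matrix.fromCols, ha, hc]
    | inl S =>
      by_cases hj : j₀ ∈ S.1
      · have hprod : ∏ j ∈ S.1, updateEntry Xstar i₀ j₀ t i₀ j
            = t * ∏ j ∈ S.1.erase j₀, Xstar i₀ j := by
          rw [← Finset.mul_prod_erase _ _ hj]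
          congr 1
          · rw [hXi j₀]; simp
          · apply Finset.prod_congr rfl
            intro j hjmem
            rw [hXi j]
            simp [Finset.ne_of_mem_erase hjmem]
        simp [fullMatrix, modelMatrix, Matrix.fromCols, ha, hc, hj, hprod]
      · have hprod : ∏ j ∈ S.1, updateEntry Xstar i₀ j₀ t i₀ j = ∏ j ∈ S.1, Xstar i₀ j := by
          apply Finset.prod_congr rfl
          intro j hjm
          rw [hXi j]
          have : j ≠ j₀ := fun h => hj (h ▸ hjm)
          simp [this]
        simp [fullMatrix, modelMatrix, Matrix.fromCols, ha, hc, hj, hprod]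
  have hM : ∀ t : ℝ,
      (fullMatrix 𝒮 Z (updateEntry Xstar i₀ j₀ t))ᵀ *
        fullMatrix 𝒮 Z (updateEntry Xstar i₀ j₀ t) + C
      = B + replicateCol Unit (fun p => a p + t * c p) * replicateRow Unit (fun p => a p + t * c p) := by
    intro t
    ext p q
    have hcr : (replicateCol Unit (fun p => a p + t * c p) * replicateRow Unit (fun p => a p + t * c p)) p q
        = (a p + t * c p) * (a q + t * c q) := by
      simp [Matrix.mul_apply]
    simp only [Matrix.add_apply, hcr, hB, Matrix.mul_apply, Matrix.transpose_apply]
    rw [← Finset.sum_erase_add _ _ (Finset.mem_univ i₀),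
        ← Finset.sum_erase_add Finset.univ (fun i => Y0 i p * Y0 i q) (Finset.mem_univ i₀)]
    have h1 : ∑ i ∈ Finset.univ.erase i₀,
        fullMatrix 𝒮 Z (updateEntry Xstar i₀ j₀ t) i p *
          fullMatrix 𝒮 Z (updateEntry Xstar i₀ j₀ t) i q
        = ∑ i ∈ Finset.univ.erase i₀, Y0 i p * Y0 i q := by
      apply Finset.sum_congr rfl
      intro i hi
      rw [hrow0 t i (Finset.ne_of_mem_erase hi) p, hrow0 t i (Finset.ne_of_mem_erase hi) q]
    have h2 : Y0 i₀ p = 0 := by rw [hY0, Matrix.updateRow_self]; rfl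
    have h3 : Y0 i₀ q = 0 := by rw [hY0, Matrix.updateRow_self]; rfl
    rw [h1, hentry t p, hentry t q, h2, h3]
    ring
  obtain ⟨α, β, γ, hαnn, hdet⟩ : ∃ α β γ : ℝ, 0 ≤ α ∧ ∀ t : ℝ,
      ((fullMatrix 𝒮 Z (updateEntry Xstar i₀ j₀ t))ᵀ *
        fullMatrix 𝒮 Z (updateEntry Xstar i₀ j₀ t) + C).det = α * t ^ 2 + β * t + γ := by
    refine ⟨c ⬝ᵥ B.adjugate *ᵥ c, a ⬝ᵥ B.adjugate *ᵥ c + c ⬝ᵥ B.adjugate *ᵥ a,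
      B.det + a ⬝ᵥ B.adjugate *ᵥ a, ?_, ?_⟩
    · have := (my_adjugate_psd hBpsd).dotProduct_mulVec_nonneg c
      simpa using this
    · intro t
      rw [hM t, my_det_lemma]
      have hvec : (fun p => a p + t * c p) = a + t • c := by
        funext p; simp
      rw [hvec]
      simp only [add_dotProduct, smul_dotProduct, Matrix.mulVec_add,
        Matrix.mulVec_smul, dotProduct_add, dotProduct_smul, smul_eq_mul]
      ring
  have hIcc : ∀ t ∈ Set.Icc (-1:ℝ) 1, ∀ i j,
      updateEntry Xstar i₀ j₀ t i j ∈ Set.Icc (-1:ℝ) 1 := by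
    intro t ht i j
    simp only [updateEntry, Matrix.of_apply]
    split
    · exact ht
    · exact hXstar i j
  have hfix : updateEntry Xstar i₀ j₀ t₀ = Xstar := by
    ext i j
    simp only [updateEntry, Matrix.of_apply]
    split
    next h => rcases h with ⟨rfl, rfl⟩; rfl
    next => rfl
  have hXdet : ((fullMatrix 𝒮 Z Xstar)ᵀ * fullMatrix 𝒮 Z Xstar + C).det
      = α * t₀ ^ 2 + β * t₀ + γ := by
    rw [← hfix] ; exact hdet t₀
  have hle : ∀ t ∈ Set.Icc (-1:ℝ) 1, α * t ^ 2 + β * t + γ ≤ α * t₀ ^ 2 + β * t₀ + γ := by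
    intro t ht
    have := hopt _ (hIcc t ht)
    rwa [hdet t, hXdet] at this
  have h1 := hle 1 (by constructor <;> norm_num)
  have h2 := hle (-1) (by constructor <;> norm_num)
  have ht2 : t₀ ^ 2 < 1 := by nlinarith
  have hα0 : α = 0 := by nlinarith
  have hβ0 : β = 0 := by
    rw [hα0] at h1 h2
    have hb1 : β ≤ 0 := by nlinarith
    have hb2 : 0 ≤ β := by nlinarith
    linarith
  intro t ht
  have heq : ((fullMatrix 𝒮 Z (updateEntry Xstar i₀ j₀ t))ᵀ *
      fullMatrix 𝒮 Z (updateEntry Xstar i₀ j₀ t) + C).det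
      = ((fullMatrix 𝒮 Z Xstar)ᵀ * fullMatrix 𝒮 Z Xstar + C).det := by
    rw [hdet t, hXdet, hα0, hβ0]
    ring
  exact ⟨heq, fun X' hX' => (hopt X' hX').trans heq.ge⟩
end

section
/- Let X₀ be an n×k matrix with entries in [−1,1], fix a row i₀ and column j₀, and for t ∈ [−1,1] let X₀(t) be X₀ with its (i₀,j₀) entry replaced by t; set M(t) = L(X₀(t))ᵀL(X₀(t)) + C. Let W be a diagonal (|𝒮|+b)×(|𝒮|+b) matrix with strictly positive diagonal entries. If the function t ↦ det(M(t)) is a nonzero constant on [−1,1], then the function t ↦ tr(W·M(t)⁻¹) attains its minimum over [−1,1] at a unique point t* ∈ [−1,1]. (This is the weighted part of Corollary 2: when the D-criterion coordinate-update formula is constant, the A_W-criterion — and its Bayesian version — has a unique optimal coordinate exchange.) -/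
open Matrix

section AuxLemmas

variable {ι : Type*} [Fintype ι] [DecidableEq ι]

set_option linter.unusedSectionVars false

lemma aux_vmv_mul (x y : ι → ℝ) (B : Matrix ι ι ℝ) :
    vecMulVec x y * B = vecMulVec x (y ᵥ* B) := by
  ext i j
  simp [Matrix.mul_apply, vecMulVec_apply, Matrix.vecMul, dotProduct,
    Finset.mul_sum, mul_assoc]

lemma aux_mul_vmv (x y : ι → ℝ) (B : Matrix ι ι ℝ) :
    B * vecMulVec x y = vecMulVec (B *ᵥ x) y := by
  ext i j
  simp [Matrix.mul_apply, vecMulVec_apply, Matrix.mulVec, dotProduct,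
    Finset.sum_mul, mul_assoc]

lemma aux_vmv_mul_vmv (x y z w : ι → ℝ) :
    vecMulVec x y * vecMulVec z w = (y ⬝ᵥ z) • vecMulVec x w := by
  ext i j
  simp [Matrix.mul_apply, vecMulVec_apply, dotProduct, Finset.sum_mul, Finset.mul_sum]
  congr 1; ext l; ring

lemma aux_vmv_mulVec (x y z : ι → ℝ) :
    vecMulVec x y *ᵥ z = (y ⬝ᵥ z) • x := by
  ext i
  simp only [Matrix.mulVec, vecMulVec_apply, dotProduct, Pi.smul_apply, smul_eq_mul,
    Finset.sum_mul]
  exact Finset.sum_congr rfl fun x' _ => by ring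

lemma aux_smul_vmv (c : ℝ) (x y : ι → ℝ) :
    vecMulVec (c • x) y = c • vecMulVec x y := by
  ext i j
  simp [vecMulVec_apply, mul_assoc]

lemma aux_zero_vmv (y : ι → ℝ) : vecMulVec (0 : ι → ℝ) y = 0 := by
  ext i j; simp [vecMulVec_apply]

lemma aux_trace_diag_mul_vmv (w x y : ι → ℝ) :
    (Matrix.diagonal w * vecMulVec x y).trace = ∑ i, w i * (x i * y i) := by
  simp [Matrix.trace, Matrix.diag, Matrix.diagonal_mul, vecMulVec_apply, mul_assoc]

lemma aux_quad_unique_min (εq βq γq : ℝ) (hε : 0 < εq) :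
    ∃! x : ℝ, x ∈ Set.Icc (-1 : ℝ) 1 ∧ ∀ t ∈ Set.Icc (-1 : ℝ) 1,
      εq * x ^ 2 + βq * x + γq ≤ εq * t ^ 2 + βq * t + γq := by
  have hcont : ContinuousOn (fun t : ℝ => εq * t ^ 2 + βq * t + γq) (Set.Icc (-1) 1) := by
    fun_prop
  obtain ⟨x, hx, hmin⟩ := isCompact_Icc.exists_isMinOn
    (⟨-1, by norm_num⟩ : (Set.Icc (-1 : ℝ) 1).Nonempty) hcont
  refine ⟨x, ⟨hx, fun t ht => hmin ht⟩, ?_⟩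
  rintro y ⟨hy, hmy⟩
  by_contra hne
  have hA : εq * x ^ 2 + βq * x + γq ≤ εq * y ^ 2 + βq * y + γq := hmin hy
  have hA' : εq * y ^ 2 + βq * y + γq ≤ εq * x ^ 2 + βq * x + γq := hmy x hx
  have hz : (x + y) / 2 ∈ Set.Icc (-1 : ℝ) 1 := by
    constructor
    · nlinarith [hx.1, hy.1]
    · nlinarith [hx.2, hy.2]
  have hB : εq * y ^ 2 + βq * y + γq ≤ εq * ((x + y) / 2) ^ 2 + βq * ((x + y) / 2) + γq :=
    hmy _ hz
  have hxy : (0 : ℝ) < (x - y) ^ 2 := by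
    have : x - y ≠ 0 := sub_ne_zero.mpr (fun h => hne h.symm)
    positivity
  nlinarith [hA, hA', hB, hxy]

end AuxLemmas

/-- The matrix `M(t) = L(X₀(t))ᵀ L(X₀(t)) + C` of the (Bayesian) criteria, as a
function of the exchanged coordinate value `t`. -/
noncomputable def critMat {n k b : ℕ} (𝒮 : Finset (Finset (Fin k)))
    (Z : Matrix (Fin n) (Fin b) ℝ)
    (C : Matrix ({S // S ∈ 𝒮} ⊕ Fin b) ({S // S ∈ 𝒮} ⊕ Fin b) ℝ)
    (X₀ : Matrix (Fin n) (Fin k) ℝ) (i₀ : Fin n) (j₀ : Fin k) (t : ℝ) :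
    Matrix ({S // S ∈ 𝒮} ⊕ Fin b) ({S // S ∈ 𝒮} ⊕ Fin b) ℝ :=
  (fullMatrix 𝒮 Z (updateEntry X₀ i₀ j₀ t))ᵀ * fullMatrix 𝒮 Z (updateEntry X₀ i₀ j₀ t) + C

/-- The weighted part of Corollary 2: when the `D`-criterion coordinate-update formula
is constant, the `A_W`-criterion (and its Bayesian version) has a unique optimal
coordinate exchange. -/
theorem stmt3 (n k m b : ℕ) (hn : 0 < n) (hk : 0 < k) (hm : 0 < m) (hmk : m ≤ k)
    (hb : 0 < b)
    (𝒮 : Finset (Finset (Fin k)))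
    (hsingle : ∀ j : Fin k, {j} ∈ 𝒮)
    (hS : ∀ S ∈ 𝒮, S.Nonempty ∧ S.card ≤ m)
    (hmax : ∃ S ∈ 𝒮, S.card = m)
    (Z : Matrix (Fin n) (Fin b) ℝ)
    (C : Matrix ({S // S ∈ 𝒮} ⊕ Fin b) ({S // S ∈ 𝒮} ⊕ Fin b) ℝ)
    (hC : C.PosSemidef)
    (X₀ : Matrix (Fin n) (Fin k) ℝ)
    (hX₀ : ∀ i j, X₀ i j ∈ Set.Icc (-1 : ℝ) 1)
    (i₀ : Fin n) (j₀ : Fin k)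
    (w : ({S // S ∈ 𝒮} ⊕ Fin b) → ℝ) (hw : ∀ a, 0 < w a)
    (hdet : ∃ c : ℝ, c ≠ 0 ∧ ∀ t ∈ Set.Icc (-1 : ℝ) 1,
      (critMat 𝒮 Z C X₀ i₀ j₀ t).det = c) :
    ∃! tstar : ℝ, tstar ∈ Set.Icc (-1 : ℝ) 1 ∧
      ∀ t ∈ Set.Icc (-1 : ℝ) 1,
        (Matrix.diagonal w * (critMat 𝒮 Z C X₀ i₀ j₀ tstar)⁻¹).trace ≤
          (Matrix.diagonal w * (critMat 𝒮 Z C X₀ i₀ j₀ t)⁻¹).trace := by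
  classical
  obtain ⟨c, hc0, hc⟩ := hdet
  -- the linear structure of the row being exchanged
  set v : ({S // S ∈ 𝒮} ⊕ Fin b) → ℝ :=
    Sum.elim (fun S => if j₀ ∈ S.1 then ∏ j ∈ S.1.erase j₀, X₀ i₀ j else 0) (fun _ => 0)
    with hvdef
  set L0 : Matrix (Fin n) ({S // S ∈ 𝒮} ⊕ Fin b) ℝ :=
    fullMatrix 𝒮 Z (updateEntry X₀ i₀ j₀ 0) with hL0def
  set a : ({S // S ∈ 𝒮} ⊕ Fin b) → ℝ := L0 i₀ with hadef
  have hL : ∀ (t : ℝ) (i : Fin n) (x : ({S // S ∈ 𝒮} ⊕ Fin b)),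
      fullMatrix 𝒮 Z (updateEntry X₀ i₀ j₀ t) i x
        = L0 i x + t * (if i = i₀ then v x else 0) := by
    intro t i x
    rcases x with S | r
    · simp only [hL0def, fullMatrix, modelMatrix, Matrix.fromCols,
        Matrix.of_apply, Sum.elim_inl, hvdef]
      by_cases hi : i = i₀
      · subst hi
        by_cases hj : j₀ ∈ S.1
        · rw [← Finset.mul_prod_erase _ _ hj, ← Finset.mul_prod_erase _ _ hj]
          have hprod : ∀ (cc : ℝ), ∏ j ∈ S.1.erase j₀, updateEntry X₀ i j₀ cc i j
              = ∏ j ∈ S.1.erase j₀, X₀ i j := by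
            intro cc
            refine Finset.prod_congr rfl fun j hj' => ?_
            have : j ≠ j₀ := Finset.ne_of_mem_erase hj'
            simp [updateEntry, this]
          rw [hprod, hprod]
          simp [updateEntry, hj]
        · have hprod : ∀ (cc : ℝ), ∏ j ∈ S.1, updateEntry X₀ i j₀ cc i j
              = ∏ j ∈ S.1, X₀ i j := by
            intro cc
            refine Finset.prod_congr rfl fun j hj' => ?_
            have : j ≠ j₀ := fun h => hj (h ▸ hj')
            simp [updateEntry, this]
          rw [hprod, hprod]
          simp [hj]
      · have hprod : ∀ (cc : ℝ), ∏ j ∈ S.1, updateEntry X₀ i₀ j₀ cc i j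
            = ∏ j ∈ S.1, X₀ i j := by
          intro cc
          refine Finset.prod_congr rfl fun j hj' => ?_
          simp [updateEntry, hi]
        rw [hprod, hprod]
        simp [hi]
    · simp [hL0def, fullMatrix, Matrix.fromCols, hvdef]
  -- quadratic decomposition of `M(t)`
  have hM : ∀ t : ℝ, critMat 𝒮 Z C X₀ i₀ j₀ t
      = critMat 𝒮 Z C X₀ i₀ j₀ 0 + t • (vecMulVec a v + vecMulVec v a)
        + (t * t) • vecMulVec v v := by
    intro t
    ext x y
    have hterm : ∀ i : Fin n,
        fullMatrix 𝒮 Z (updateEntry X₀ i₀ j₀ t) i x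
          * fullMatrix 𝒮 Z (updateEntry X₀ i₀ j₀ t) i y
        = L0 i x * L0 i y
          + (if i = i₀ then t * (a x * v y + v x * a y) + t * t * (v x * v y) else 0) := by
      intro i
      rw [hL t i x, hL t i y]
      by_cases hi : i = i₀
      · subst hi
        simp only [eq_self_iff_true, if_true, hadef]
        ring
      · simp [hi]
    have hL00 : ∀ i x', fullMatrix 𝒮 Z (updateEntry X₀ i₀ j₀ 0) i x' = L0 i x' := by
      intro i x'; rw [hL0def]
    simp only [critMat, Matrix.add_apply, Matrix.smul_apply, Matrix.mul_apply,
      Matrix.transpose_apply, Matrix.vecMulVec_apply, smul_eq_mul]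
    rw [Finset.sum_congr rfl fun i _ => hterm i, Finset.sum_add_distrib,
      Finset.sum_ite_eq' Finset.univ i₀]
    simp only [Finset.mem_univ, if_pos, hL00]
    ring
  -- `N = M(0)` is positive definite
  set N : Matrix ({S // S ∈ 𝒮} ⊕ Fin b) ({S // S ∈ 𝒮} ⊕ Fin b) ℝ :=
    critMat 𝒮 Z C X₀ i₀ j₀ 0 with hNdef
  have hNdet : N.det = c := hc 0 (by norm_num)
  have hNpsd : N.PosSemidef := by
    have h1 : ((fullMatrix 𝒮 Z (updateEntry X₀ i₀ j₀ 0))ᵀ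
        * fullMatrix 𝒮 Z (updateEntry X₀ i₀ j₀ 0)).PosSemidef := by
      have := Matrix.posSemidef_conjTranspose_mul_self (fullMatrix 𝒮 Z (updateEntry X₀ i₀ j₀ 0))
      rwa [Matrix.conjTranspose_eq_transpose_of_trivial] at this
    exact h1.add hC
  have hNpd : N.PosDef := by
    refine Matrix.PosDef.of_dotProduct_mulVec_pos hNpsd.1 fun x hx => ?_
    rcases lt_or_eq_of_le (hNpsd.dotProduct_mulVec_nonneg x) with h | h
    · exact h
    · exfalso
      have h0 : N *ᵥ x = 0 := (hNpsd.dotProduct_mulVec_zero_iff x).mp h.symm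
      have : N.det = 0 := (Matrix.exists_mulVec_eq_zero_iff).mp ⟨x, hx, h0⟩
      rw [hNdet] at this; exact hc0 this
  have hNunit : IsUnit N.det := by rw [hNdet]; exact hc0.isUnit
  have hNN : N * N⁻¹ = 1 := Matrix.mul_nonsing_inv N hNunit
  have hNinvsymm : (N⁻¹)ᵀ = N⁻¹ := by
    rw [Matrix.transpose_nonsing_inv]
    congr 1
    have := hNpd.1
    rwa [Matrix.IsHermitian, Matrix.conjTranspose_eq_transpose_of_trivial] at this
  have hNinvpd : (N⁻¹).PosDef := hNpd.inv
  -- derived vectors and scalars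
  set a' : ({S // S ∈ 𝒮} ⊕ Fin b) → ℝ := N⁻¹ *ᵥ a with ha'def
  set v' : ({S // S ∈ 𝒮} ⊕ Fin b) → ℝ := N⁻¹ *ᵥ v with hv'def
  have ha' : N *ᵥ a' = a := by
    rw [ha'def, Matrix.mulVec_mulVec, hNN, Matrix.one_mulVec]
  have hv' : N *ᵥ v' = v := by
    rw [hv'def, Matrix.mulVec_mulVec, hNN, Matrix.one_mulVec]
  have ham : a ᵥ* N⁻¹ = a' := by
    rw [← Matrix.mulVec_transpose, hNinvsymm, ← ha'def]
  have hvm : v ᵥ* N⁻¹ = v' := by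
    rw [← Matrix.mulVec_transpose, hNinvsymm, ← hv'def]
  have hsym : a ⬝ᵥ v' = v ⬝ᵥ a' := by
    rw [hv'def, Matrix.dotProduct_mulVec, ← Matrix.mulVec_transpose, hNinvsymm,
      ← ha'def, dotProduct_comm]
  -- `v ≠ 0` since its coordinate at the singleton `{j₀}` is `1`
  have hv1 : v (Sum.inl ⟨{j₀}, hsingle j₀⟩) = 1 := by
    simp [hvdef, Finset.erase_singleton]
  have hvne : v ≠ 0 := by
    intro h
    rw [h] at hv1
    simpa using hv1
  have hspos : 0 < v ⬝ᵥ v' := by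
    have hstar : star v = v := funext fun i => star_trivial _
    have := hNinvpd.dotProduct_mulVec_pos hvne
    rwa [hstar, ← hv'def] at this
  -- the determinant identity forces `q = 0` and `p = 1`
  set q : ℝ := v ⬝ᵥ a' with hqdef
  set p : ℝ := a ⬝ᵥ a' with hpdef
  set s : ℝ := v ⬝ᵥ v' with hsdef
  set U : Matrix ({S // S ∈ 𝒮} ⊕ Fin b) (Fin 2) ℝ :=
    Matrix.of fun x j => ![a x, v x] j with hUdef
  set Wt : ℝ → Matrix (Fin 2) ({S // S ∈ 𝒮} ⊕ Fin b) ℝ :=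
    fun t => Matrix.of fun j x => ![t * v x, t * a x + t * t * v x] j with hWdef
  have hUW : ∀ t : ℝ, U * Wt t
      = t • (vecMulVec a v + vecMulVec v a) + (t * t) • vecMulVec v v := by
    intro t
    ext x y
    simp [hUdef, hWdef, Matrix.mul_apply, Fin.sum_univ_two, vecMulVec_apply]
    ring
  have hMfact : ∀ t : ℝ, critMat 𝒮 Z C X₀ i₀ j₀ t = N * (1 + (N⁻¹ * U) * Wt t) := by
    intro t
    rw [Matrix.mul_add, Matrix.mul_one, ← Matrix.mul_assoc, ← Matrix.mul_assoc, hNN,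
      Matrix.one_mul, hUW, hM]
    ring_nf
    rw [add_assoc]
  have hNU : N⁻¹ * U = Matrix.of fun x j => ![a' x, v' x] j := by
    ext x j
    fin_cases j <;>
      simp [hUdef, ha'def, hv'def, Matrix.mul_apply, Matrix.mulVec, dotProduct]
  have hdot2 : ∀ (y z ww : ({S // S ∈ 𝒮} ⊕ Fin b) → ℝ) (α β : ℝ),
      ∑ x, (α * y x + β * z x) * ww x = α * (y ⬝ᵥ ww) + β * (z ⬝ᵥ ww) := by
    intro y z ww α β
    rw [dotProduct, dotProduct, Finset.mul_sum, Finset.mul_sum, ← Finset.sum_add_distrib]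
    exact Finset.sum_congr rfl fun x _ => by ring
  have hdot1 : ∀ (y ww : ({S // S ∈ 𝒮} ⊕ Fin b) → ℝ) (α : ℝ),
      ∑ x, (α * y x) * ww x = α * (y ⬝ᵥ ww) := by
    intro y ww α
    rw [dotProduct, Finset.mul_sum]
    exact Finset.sum_congr rfl fun x _ => by ring
  have hsmall : ∀ t : ℝ, Wt t * (N⁻¹ * U)
      = Matrix.of fun i j : Fin 2 =>
        !![t * (v ⬝ᵥ a'), t * (v ⬝ᵥ v');
           t * (a ⬝ᵥ a') + t * t * (v ⬝ᵥ a'), t * (a ⬝ᵥ v') + t * t * (v ⬝ᵥ v')] i j := by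
    intro t
    rw [hNU]
    ext i j
    rw [Matrix.mul_apply]
    fin_cases i <;> fin_cases j <;>
        simp only [hWdef, Matrix.of_apply, Matrix.cons_val_zero, Matrix.cons_val_one,
          Matrix.head_cons, Fin.zero_eta, Fin.mk_one, Fin.isValue,
          Matrix.cons_val', Matrix.empty_val', Matrix.cons_val_fin_one, Matrix.head_fin_const]
    · rw [hdot1 v a' t]
    · rw [hdot1 v v' t]
    · rw [hdot2 a v a' t (t*t)]
    · rw [hdot2 a v v' t (t*t)]
  have hdetformula : ∀ t : ℝ, (critMat 𝒮 Z C X₀ i₀ j₀ t).det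
      = c * (1 + 2*q*t + (q*q + s - s*p)*(t*t)) := by
    intro t
    rw [hMfact, Matrix.det_mul, hNdet, Matrix.det_one_add_mul_comm, hsmall,
      Matrix.det_fin_two]
    simp only [Matrix.add_apply, Matrix.one_apply, Matrix.of_apply,
      Matrix.cons_val', Matrix.cons_val_zero, Matrix.cons_val_one, Matrix.head_cons,
      Matrix.empty_val', Matrix.cons_val_fin_one, Matrix.head_fin_const]
    rw [hsym, ← hqdef, ← hpdef, ← hsdef]
    norm_num
    exact Or.inl (by ring)
  have e1 := hdetformula 1
  have e2 := hdetformula (-1)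
  rw [hc 1 (by norm_num)] at e1
  rw [hc (-1) (by norm_num)] at e2
  have hq0 : q = 0 := by
    have h4 : c * q = 0 := by linear_combination (-1/4 : ℝ) * e1 + (1/4 : ℝ) * e2
    rcases mul_eq_zero.mp h4 with h | h
    · exact absurd h hc0
    · exact h
  have he0 : q * q + s - s * p = 0 := by
    have hE : c * (q*q + s - s*p) = 0 := by
      linear_combination (-1/2 : ℝ) * e1 + (-1/2 : ℝ) * e2
    rcases mul_eq_zero.mp hE with h | h
    · exact absurd h hc0
    · exact h
  have hp1 : p = 1 := by
    have hsp : s * (1 - p) = 0 := by linear_combination he0 - q * hq0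
    rcases mul_eq_zero.mp hsp with h | h
    · exact absurd h (ne_of_gt hspos)
    · linarith
  -- the explicit inverse of `M(t)`
  have hq0' : a ⬝ᵥ v' = 0 := hsym.trans hq0
  have hq0v : v ⬝ᵥ a' = 0 := by rw [← hqdef, hq0]
  have hp1a : a ⬝ᵥ a' = 1 := by rw [← hpdef, hp1]
  have hsv : v ⬝ᵥ v' = s := by rw [← hsdef]
  have hMQ : ∀ t : ℝ, critMat 𝒮 Z C X₀ i₀ j₀ t
      * (N⁻¹ - t • (vecMulVec a' v' + vecMulVec v' a')
          + (t * t * s) • vecMulVec a' a') = 1 := by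
    intro t
    rw [hM]
    simp only [Matrix.mul_add, Matrix.add_mul, Matrix.mul_sub, Matrix.sub_mul,
      Matrix.smul_mul, Matrix.mul_smul,
      aux_vmv_mul, aux_mul_vmv, aux_vmv_mulVec, aux_smul_vmv, aux_zero_vmv, aux_vmv_mul_vmv,
      hNN, ha', hv', ham, hvm, hq0v, hq0', hp1a, hsv,
      zero_smul, one_smul, smul_add, smul_sub, smul_smul, smul_zero]
    module
  have hinv : ∀ t : ℝ, (critMat 𝒮 Z C X₀ i₀ j₀ t)⁻¹
      = N⁻¹ - t • (vecMulVec a' v' + vecMulVec v' a') + (t * t * s) • vecMulVec a' a' :=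
    fun t => Matrix.inv_eq_right_inv (hMQ t)
  -- the trace is a quadratic with positive leading coefficient
  set ρ : ℝ := ∑ i, w i * (a' i * a' i) with hρdef
  set δ : ℝ := (∑ i, w i * (a' i * v' i)) + (∑ i, w i * (v' i * a' i)) with hδdef
  set γ : ℝ := (Matrix.diagonal w * N⁻¹).trace with hγdef
  have hρpos : 0 < ρ := by
    have ha'ne : a' ≠ 0 := by
      intro h
      rw [h] at hp1a
      simp [dotProduct] at hp1a
    obtain ⟨i, hi⟩ := Function.ne_iff.mp ha'ne
    refine Finset.sum_pos' (fun j _ => mul_nonneg (hw j).le (mul_self_nonneg _)) ⟨i, Finset.mem_univ i, ?_⟩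
    have hne0 : a' i ≠ 0 := by simpa using hi
    exact mul_pos (hw i) (mul_self_pos.mpr hne0)
  have key : ∀ t : ℝ, (Matrix.diagonal w * (critMat 𝒮 Z C X₀ i₀ j₀ t)⁻¹).trace
      = (s * ρ) * t ^ 2 + (-δ) * t + γ := by
    intro t
    rw [hinv t]
    rw [Matrix.mul_add, Matrix.mul_sub, Matrix.mul_smul, Matrix.mul_smul, Matrix.mul_add,
      Matrix.trace_add, Matrix.trace_sub, Matrix.trace_smul, Matrix.trace_smul,
      Matrix.trace_add, aux_trace_diag_mul_vmv, aux_trace_diag_mul_vmv, aux_trace_diag_mul_vmv]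
    simp only [smul_eq_mul, hρdef, hδdef, hγdef]
    ring
  have hεpos : 0 < s * ρ := mul_pos hspos hρpos
  simp only [key]
  exact aux_quad_unique_min (s * ρ) (-δ) γ hεpos
end

section
/- Assume ZᵀZ is invertible, let P_Z = Z(ZᵀZ)⁻¹Zᵀ, and let z_{i₀} denote the i₀-th row of Z. Let X₀ be an n×k matrix with entries in [−1,1], fix a row i₀ and column j₀, and for t ∈ [−1,1] let X₀(t) be X₀ with its (i₀,j₀) entry replaced by t; set N(t) = F(X₀(t))ᵀ(I−P_Z)F(X₀(t)) + C_F. If the function t ↦ det(N(t)) is a nonzero constant on [−1,1] and z_{i₀}ᵀ(ZᵀZ)⁻¹z_{i₀} < 1, then the function t ↦ tr(N(t)⁻¹) attains its minimum over [−1,1] at a unique point t* ∈ [−1,1]. (This is the A_s part of Corollary 2: when the D_s coordinate-update formula is constant and the nuisance leverage of run i₀ is below one, the A_s-criterion has a unique optimal coordinate exchange.) -/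
set_option linter.unusedSectionVars false
set_option maxHeartbeats 1000000


open Matrix

section Aux
variable {ι κ μ : Type*} [Fintype ι] [Fintype κ] [Fintype μ]

lemma vecMulVec_mul_mat (x : ι → ℝ) (y : κ → ℝ) (A : Matrix κ μ ℝ) :
    vecMulVec x y * A = vecMulVec x (y ᵥ* A) := by
  ext i j
  simp [vecMulVec_apply, mul_apply, vecMul, dotProduct, Finset.mul_sum, mul_assoc]

lemma mat_mul_vecMulVec (A : Matrix μ κ ℝ) (x : κ → ℝ) (y : ι → ℝ) :
    A * vecMulVec x y = vecMulVec (A *ᵥ x) y := by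
  ext i j
  simp only [vecMulVec_apply, mul_apply, mulVec, dotProduct, Finset.sum_mul]
  exact Finset.sum_congr rfl fun k _ => by ring

lemma vecMulVec_mul_vecMulVec (x : ι → ℝ) (y u : κ → ℝ) (v : μ → ℝ) :
    vecMulVec x y * vecMulVec u v = (y ⬝ᵥ u) • vecMulVec x v := by
  ext i j
  simp only [vecMulVec_apply, mul_apply, Matrix.smul_apply, dotProduct, Finset.sum_mul,
    Finset.mul_sum, smul_eq_mul]
  exact Finset.sum_congr rfl fun k _ => by ring

lemma transpose_vecMulVec' (x : ι → ℝ) (y : κ → ℝ) :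
    (vecMulVec x y)ᵀ = vecMulVec y x := by
  ext i j; simp [vecMulVec_apply, mul_comm]

lemma trace_vecMulVec' (x y : ι → ℝ) : (vecMulVec x y).trace = x ⬝ᵥ y := by
  simp [trace, vecMulVec_apply, dotProduct, diag]

end Aux

/-- The matrix `N(t) = F(X₀(t))ᵀ (I − P_Z) F(X₀(t)) + C_F` of the (Bayesian)
`A_s`-criterion, as a function of the exchanged coordinate value `t`. -/
noncomputable def critMatS {n k b : ℕ} (𝒮 : Finset (Finset (Fin k)))
    (Z : Matrix (Fin n) (Fin b) ℝ)
    (CF : Matrix {S // S ∈ 𝒮} {S // S ∈ 𝒮} ℝ)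
    (X₀ : Matrix (Fin n) (Fin k) ℝ) (i₀ : Fin n) (j₀ : Fin k) (t : ℝ) :
    Matrix {S // S ∈ 𝒮} {S // S ∈ 𝒮} ℝ :=
  (modelMatrix 𝒮 (updateEntry X₀ i₀ j₀ t))ᵀ * (1 - Z * (Zᵀ * Z)⁻¹ * Zᵀ) *
      modelMatrix 𝒮 (updateEntry X₀ i₀ j₀ t) + CF

lemma modelMatrix_update {n k : ℕ} (𝒮 : Finset (Finset (Fin k)))
    (X₀ : Matrix (Fin n) (Fin k) ℝ) (i₀ : Fin n) (j₀ : Fin k) (t : ℝ) :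
    modelMatrix 𝒮 (updateEntry X₀ i₀ j₀ t) =
      modelMatrix 𝒮 (updateEntry X₀ i₀ j₀ 0) +
        t • vecMulVec (Pi.single i₀ 1)
          (fun S : {S // S ∈ 𝒮} =>
            if j₀ ∈ S.1 then ∏ j ∈ S.1.erase j₀, X₀ i₀ j else 0) := by
  ext i S
  simp only [modelMatrix, updateEntry, Matrix.add_apply, Matrix.smul_apply, Matrix.of_apply,
    vecMulVec_apply, Pi.single_apply, smul_eq_mul]
  by_cases hi : i = i₀
  · subst hi
    simp only [if_pos rfl, true_and, mul_one]
    by_cases hj : j₀ ∈ S.1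
    · rw [← Finset.mul_prod_erase _ _ hj, ← Finset.mul_prod_erase _ _ hj]
      simp only [if_pos rfl, if_pos hj]
      have herase : ∀ g : ℝ, ∏ j ∈ S.1.erase j₀, (if j = j₀ then g else X₀ i j) =
          ∏ j ∈ S.1.erase j₀, X₀ i j := fun g =>
        Finset.prod_congr rfl fun j hjm => if_neg (Finset.ne_of_mem_erase hjm)
      rw [herase, herase]
      simp only [if_true]
      ring
    · simp only [if_neg hj, mul_zero, add_zero]
      have herase : ∀ g : ℝ, ∏ j ∈ S.1, (if j = j₀ then g else X₀ i j) =
          ∏ j ∈ S.1, X₀ i j := fun g =>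
        Finset.prod_congr rfl fun j hjm => if_neg (by rintro rfl; exact hj hjm)
      rw [herase, herase]
  · simp only [if_neg hi, mul_zero, zero_mul, add_zero]
    have : ∀ j, (i = i₀ ∧ j = j₀) = False := fun j => by simp [hi]
    simp only [this, if_false]

/-- The `A_s` part of Corollary 2: when the `D_s` coordinate-update formula is constant
and the nuisance leverage of run `i₀` is below one, the `A_s`-criterion has a unique
optimal coordinate exchange. -/
theorem stmt4 (n k m b : ℕ) (hn : 0 < n) (hk : 0 < k) (hm : 0 < m) (hmk : m ≤ k)
    (hb : 0 < b)
    (𝒮 : Finset (Finset (Fin k)))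
    (hsingle : ∀ j : Fin k, {j} ∈ 𝒮)
    (hS : ∀ S ∈ 𝒮, S.Nonempty ∧ S.card ≤ m)
    (hmax : ∃ S ∈ 𝒮, S.card = m)
    (Z : Matrix (Fin n) (Fin b) ℝ)
    (hZ : IsUnit (Zᵀ * Z))
    (CF : Matrix {S // S ∈ 𝒮} {S // S ∈ 𝒮} ℝ)
    (hCF : CF.PosSemidef)
    (X₀ : Matrix (Fin n) (Fin k) ℝ)
    (hX₀ : ∀ i j, X₀ i j ∈ Set.Icc (-1 : ℝ) 1)
    (i₀ : Fin n) (j₀ : Fin k)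
    (hdet : ∃ c : ℝ, c ≠ 0 ∧ ∀ t ∈ Set.Icc (-1 : ℝ) 1,
      (critMatS 𝒮 Z CF X₀ i₀ j₀ t).det = c)
    (hlev : Z i₀ ⬝ᵥ ((Zᵀ * Z)⁻¹ *ᵥ Z i₀) < 1) :
    ∃! tstar : ℝ, tstar ∈ Set.Icc (-1 : ℝ) 1 ∧
      ∀ t ∈ Set.Icc (-1 : ℝ) 1,
        ((critMatS 𝒮 Z CF X₀ i₀ j₀ tstar)⁻¹).trace ≤
          ((critMatS 𝒮 Z CF X₀ i₀ j₀ t)⁻¹).trace := by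
  classical
  obtain ⟨c, hc0, hcdet⟩ := hdet
  set M : Matrix (Fin n) (Fin n) ℝ := 1 - Z * (Zᵀ * Z)⁻¹ * Zᵀ with hMdef
  set e : Fin n → ℝ := Pi.single i₀ 1 with hedef
  set w : {S // S ∈ 𝒮} → ℝ :=
    (fun S : {S // S ∈ 𝒮} => if j₀ ∈ S.1 then ∏ j ∈ S.1.erase j₀, X₀ i₀ j else 0) with hwdef
  set F₀ : Matrix (Fin n) {S // S ∈ 𝒮} ℝ := modelMatrix 𝒮 (updateEntry X₀ i₀ j₀ 0) with hF₀def
  set N : ℝ → Matrix {S // S ∈ 𝒮} {S // S ∈ 𝒮} ℝ := critMatS 𝒮 Z CF X₀ i₀ j₀ with hNdef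
  -- basic facts about Z and M
  have hZdet : IsUnit (Zᵀ * Z).det := (Matrix.isUnit_iff_isUnit_det _).mp hZ
  have hZZinv : (Zᵀ * Z) * (Zᵀ * Z)⁻¹ = 1 := Matrix.mul_nonsing_inv _ hZdet
  have hZZTsym : ((Zᵀ * Z)⁻¹)ᵀ = (Zᵀ * Z)⁻¹ := by
    rw [Matrix.transpose_nonsing_inv, Matrix.transpose_mul, Matrix.transpose_transpose]
  have hMT : Mᵀ = M := by
    rw [hMdef]
    simp only [Matrix.transpose_sub, Matrix.transpose_one, Matrix.transpose_mul,
      Matrix.transpose_transpose, hZZTsym]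
    rw [Matrix.mul_assoc]
  have hMM : M * M = M := by
    rw [hMdef]
    have : Z * (Zᵀ * Z)⁻¹ * Zᵀ * (Z * (Zᵀ * Z)⁻¹ * Zᵀ) = Z * (Zᵀ * Z)⁻¹ * Zᵀ := by
      have h1 : Z * (Zᵀ * Z)⁻¹ * Zᵀ * (Z * (Zᵀ * Z)⁻¹ * Zᵀ)
          = Z * ((Zᵀ * Z)⁻¹ * ((Zᵀ * Z) * (Zᵀ * Z)⁻¹)) * Zᵀ := by
        simp only [Matrix.mul_assoc]
      rw [h1, hZZinv, mul_one]
    rw [sub_mul, one_mul, mul_sub, mul_one, this]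
    abel
  have hMpsd : M.PosSemidef := by
    have hconj : Mᴴ = Mᵀ := rfl
    have := Matrix.posSemidef_conjTranspose_mul_self M
    rwa [hconj, hMT, hMM] at this
  set s : ℝ := e ⬝ᵥ (M *ᵥ e) with hsdef
  set f : {S // S ∈ 𝒮} → ℝ := F₀ᵀ *ᵥ (M *ᵥ e) with hfdef
  -- s is one minus the leverage
  have hZe : Zᵀ *ᵥ e = Z i₀ := by
    ext j
    simp [hedef, mulVec, dotProduct, Pi.single_apply, Finset.sum_ite_eq', mul_comm]
  have hee : e ⬝ᵥ e = 1 := by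
    simp [hedef, dotProduct, Pi.single_apply, Finset.sum_ite_eq']
  have heZ : e ᵥ* Z = Z i₀ := by
    ext j
    simp [hedef, vecMul, dotProduct, Pi.single_apply, Finset.sum_ite_eq']
  have hsval : s = 1 - Z i₀ ⬝ᵥ ((Zᵀ * Z)⁻¹ *ᵥ Z i₀) := by
    rw [hsdef, hMdef]
    rw [Matrix.sub_mulVec, Matrix.one_mulVec, dotProduct_sub, hee]
    congr 1
    rw [← Matrix.mulVec_mulVec, ← Matrix.mulVec_mulVec, dotProduct_mulVec, heZ, hZe]
  have hspos : 0 < s := by rw [hsval]; linarith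
  -- the rank-two decomposition of N t
  have hsymdot : ∀ (K : Matrix {S // S ∈ 𝒮} {S // S ∈ 𝒮} ℝ), Kᵀ = K →
      ∀ x y : {S // S ∈ 𝒮} → ℝ, x ⬝ᵥ (K *ᵥ y) = y ⬝ᵥ (K *ᵥ x) := by
    intro K hKT x y
    rw [dotProduct_mulVec, dotProduct_comm, ← Matrix.mulVec_transpose, hKT]
  have hvecMulM : e ᵥ* M = M *ᵥ e := by
    conv_lhs => rw [← hMT]
    rw [Matrix.vecMul_transpose]
  have hNt : ∀ t : ℝ, N t = N 0 + t • (vecMulVec f w + vecMulVec w f)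
      + (s * t ^ 2) • vecMulVec w w := by
    intro t
    have hcrit : ∀ u : ℝ, N u = (F₀ + u • vecMulVec e w)ᵀ * M * (F₀ + u • vecMulVec e w) + CF := by
      intro u
      show critMatS 𝒮 Z CF X₀ i₀ j₀ u = _
      unfold critMatS
      rw [modelMatrix_update 𝒮 X₀ i₀ j₀ u]
    have h0 : N 0 = F₀ᵀ * M * F₀ + CF := by
      rw [hcrit 0]
      simp
    have hfw : F₀ᵀ * M * vecMulVec e w = vecMulVec f w := by
      rw [Matrix.mul_assoc, mat_mul_vecMulVec, mat_mul_vecMulVec]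
    have hwf : (vecMulVec e w)ᵀ * M * F₀ = vecMulVec w f := by
      rw [transpose_vecMulVec', vecMulVec_mul_mat, hvecMulM, vecMulVec_mul_mat,
        ← Matrix.mulVec_transpose]
    have hww : (vecMulVec e w)ᵀ * M * vecMulVec e w = s • vecMulVec w w := by
      rw [transpose_vecMulVec', vecMulVec_mul_mat, hvecMulM, _root_.vecMulVec_mul_vecMulVec]
      rw [hsdef, dotProduct_comm]
    rw [hcrit t, h0]
    simp only [Matrix.transpose_add, Matrix.transpose_smul, Matrix.add_mul, Matrix.mul_add,
      Matrix.smul_mul, Matrix.mul_smul, smul_smul]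
    rw [hfw, hwf, hww]
    module
  -- N 0 is positive definite
  have hicc0 : (0 : ℝ) ∈ Set.Icc (-1 : ℝ) 1 := by norm_num
  have hdet0 : (N 0).det = c := hcdet 0 hicc0
  have hN0det : IsUnit (N 0).det := by rw [hdet0]; exact hc0.isUnit
  have hN0psd : (N 0).PosSemidef := by
    have h0 : N 0 = F₀ᵀ * M * F₀ + CF := rfl
    rw [h0]
    have h1 : (F₀ᵀ * M * F₀).PosSemidef := by
      have := hMpsd.conjTranspose_mul_mul_same F₀
      simpa using this
    exact h1.add hCF
  have hN0pd : (N 0).PosDef := by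
    refine Matrix.PosDef.of_dotProduct_mulVec_pos hN0psd.1 (fun x hx => ?_)
    rcases lt_or_eq_of_le (hN0psd.dotProduct_mulVec_nonneg x) with h | h
    · exact h
    · exfalso
      have hzero : N 0 *ᵥ x = 0 := (hN0psd.dotProduct_mulVec_zero_iff x).mp h.symm
      have : x = 0 := by
        have hxx : (N 0)⁻¹ *ᵥ (N 0 *ᵥ x) = x := by
          rw [Matrix.mulVec_mulVec, Matrix.nonsing_inv_mul _ hN0det, Matrix.one_mulVec]
        rw [hzero, Matrix.mulVec_zero] at hxx
        exact hxx.symm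
      exact hx this
  set K : Matrix {S // S ∈ 𝒮} {S // S ∈ 𝒮} ℝ := (N 0)⁻¹ with hKdef
  have hKpd : K.PosDef := hN0pd.inv
  have hKT : Kᵀ = K := hKpd.1
  have hN0K : N 0 * K = 1 := Matrix.mul_nonsing_inv _ hN0det
  have hKN0 : K * N 0 = 1 := Matrix.nonsing_inv_mul _ hN0det
  set a : ℝ := w ⬝ᵥ (K *ᵥ w) with hadef
  set β : ℝ := w ⬝ᵥ (K *ᵥ f) with hβdef
  set γ : ℝ := f ⬝ᵥ (K *ᵥ f) with hγdef
  -- determinant of N t via Weinstein–Aronszajn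
  set U : Matrix {S // S ∈ 𝒮} (Fin 2) ℝ := Matrix.of (fun S j => ![w S, f S] j) with hUdef
  have hU0 : (fun S => U S 0) = w := by funext S; simp [hUdef]
  have hU1 : (fun S => U S 1) = f := by funext S; simp [hUdef]
  have hUBU : ∀ t : ℝ, U * !![s * t ^ 2, t; t, 0] * Uᵀ =
      t • (vecMulVec f w + vecMulVec w f) + (s * t ^ 2) • vecMulVec w w := by
    intro t
    ext S T
    simp only [mul_apply, Fin.sum_univ_two, transpose_apply, Matrix.add_apply,
      Matrix.smul_apply, vecMulVec_apply, smul_eq_mul, hUdef, Matrix.of_apply,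
      Matrix.cons_val', Matrix.cons_val_zero, Matrix.cons_val_one, Matrix.head_cons,
      Matrix.empty_val', Matrix.cons_val_fin_one, Matrix.head_fin_const]
    ring
  have hNU : ∀ t : ℝ, N t = N 0 + U * !![s * t ^ 2, t; t, 0] * Uᵀ := by
    intro t
    rw [hNt t, hUBU t]
    abel
  have hentry : ∀ i j : Fin 2, (Uᵀ * (K * U)) i j = (fun S => U S i) ⬝ᵥ (K *ᵥ fun S => U S j) := by
    intro i j
    simp only [mul_apply, transpose_apply, dotProduct, mulVec, Finset.mul_sum]
  have hG2 : Uᵀ * (K * U) = !![a, β; β, γ] := by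
    ext i j
    fin_cases i <;> fin_cases j <;>
      rw [hentry] <;>
      simp only [hU0, hU1, Fin.isValue] <;>
      simp only [Matrix.cons_val', Matrix.cons_val_zero, Matrix.cons_val_one, Matrix.head_cons,
        Matrix.empty_val', Matrix.cons_val_fin_one, Matrix.head_fin_const, Matrix.of_apply]
    · exact hadef.symm
    · exact hβdef.symm
    · rw [hsymdot K hKT]; exact hβdef.symm
    · exact hγdef.symm
  have hdetform : ∀ t : ℝ, (N t).det =
      (N 0).det * ((1 + (a * (s * t ^ 2) + β * t)) * (1 + β * t)
        - (β * (s * t ^ 2) + γ * t) * (a * t)) := by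
    intro t
    have h1 : N t = N 0 * (1 + (K * U * !![s * t ^ 2, t; t, 0]) * Uᵀ) := by
      rw [Matrix.mul_add, Matrix.mul_one, hNU t]
      congr 1
      have hassoc : N 0 * (K * U * !![s * t ^ 2, t; t, 0] * Uᵀ)
          = (N 0 * K) * (U * !![s * t ^ 2, t; t, 0] * Uᵀ) := by
        simp only [Matrix.mul_assoc]
      rw [hassoc, hN0K, Matrix.one_mul]
    rw [h1, Matrix.det_mul, Matrix.det_one_add_mul_comm]
    have h2 : Uᵀ * (K * U * !![s * t ^ 2, t; t, 0]) = !![a, β; β, γ] * !![s * t ^ 2, t; t, 0] := by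
      simp only [← Matrix.mul_assoc]
      rw [Matrix.mul_assoc Uᵀ K U, hG2]
    rw [h2, Matrix.mul_fin_two, Matrix.one_fin_two]
    have : (!![1, 0; 0, 1] + !![a * (s * t ^ 2) + β * t, a * t + β * 0;
        β * (s * t ^ 2) + γ * t, β * t + γ * 0] : Matrix (Fin 2) (Fin 2) ℝ) =
        !![1 + (a * (s * t ^ 2) + β * t), a * t; β * (s * t ^ 2) + γ * t, 1 + β * t] := by
      norm_num
    rw [this, Matrix.det_fin_two_of]
    ring
  -- from constancy of the determinant: β = 0 and a * s = a * γ
  have hqt : ∀ t ∈ Set.Icc (-1 : ℝ) 1, (1 + (a * (s * t ^ 2) + β * t)) * (1 + β * t)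
      - (β * (s * t ^ 2) + γ * t) * (a * t) = 1 := by
    intro t ht
    have h1 := hcdet t ht
    rw [hdetform t, hdet0] at h1
    exact mul_left_cancel₀ hc0 (h1.trans (mul_one c).symm)
  have e1 := hqt 1 (by norm_num)
  have e2 := hqt (-1) (by norm_num)
  have hβ0 : β = 0 := by linear_combination (e1 - e2) / 4
  have hasγ : a * s = a * γ := by linear_combination (e1 + e2) / 2 - β * hβ0
  -- w is nonzero thanks to the singleton {j₀}
  have hwne : w ≠ 0 := by
    intro h
    have h1 : w ⟨{j₀}, hsingle j₀⟩ = 1 := by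
      rw [hwdef]
      simp
    rw [h] at h1
    simp at h1
  have ha : 0 < a := by
    have h := hKpd.dotProduct_mulVec_pos hwne
    rw [hadef]
    simpa using h
  have hγs : γ = s := (mul_left_cancel₀ (ne_of_gt ha) hasγ).symm
  -- auxiliary vectors
  set w' : {S // S ∈ 𝒮} → ℝ := K *ᵥ w with hw'def
  set f' : {S // S ∈ 𝒮} → ℝ := K *ᵥ f with hf'def
  have hvK : ∀ y : {S // S ∈ 𝒮} → ℝ, y ᵥ* K = K *ᵥ y := by
    intro y
    conv_lhs => rw [← hKT]
    rw [Matrix.vecMul_transpose]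
  have hd_w'w : w' ⬝ᵥ w = a := by rw [hw'def, dotProduct_comm, hadef]
  have hd_w'f : w' ⬝ᵥ f = 0 := by
    rw [hw'def, dotProduct_comm, hsymdot K hKT, ← hβdef, hβ0]
  have hd_f'w : f' ⬝ᵥ w = 0 := by
    rw [hf'def, dotProduct_comm, ← hβdef, hβ0]
  have hd_f'f : f' ⬝ᵥ f = s := by rw [hf'def, dotProduct_comm, ← hγdef, hγs]
  set A1 := vecMulVec f w' with hA1def
  set A2 := vecMulVec w f' with hA2def
  set A3 := vecMulVec w w' with hA3def
  set A4 := vecMulVec f f' with hA4def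
  have hP1 : A1 * A2 = a • A4 := by
    rw [hA1def, hA2def, hA4def, _root_.vecMulVec_mul_vecMulVec, hd_w'w]
  have hP2 : A1 * A1 = 0 := by
    rw [hA1def, _root_.vecMulVec_mul_vecMulVec, hd_w'f, zero_smul]
  have hP3 : A1 * A4 = 0 := by
    rw [hA1def, hA4def, _root_.vecMulVec_mul_vecMulVec, hd_w'f, zero_smul]
  have hP4 : A2 * A2 = 0 := by
    rw [hA2def, _root_.vecMulVec_mul_vecMulVec, hd_f'w, zero_smul]
  have hP5 : A2 * A1 = s • A3 := by
    rw [hA2def, hA1def, hA3def, _root_.vecMulVec_mul_vecMulVec, hd_f'f]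
  have hP6 : A2 * A4 = s • A2 := by
    rw [hA2def, hA4def, _root_.vecMulVec_mul_vecMulVec, hd_f'f]
  have hP7 : A3 * A2 = a • A2 := by
    rw [hA3def, hA2def, _root_.vecMulVec_mul_vecMulVec, hd_w'w]
  have hP8 : A3 * A1 = 0 := by
    rw [hA3def, hA1def, _root_.vecMulVec_mul_vecMulVec, hd_w'f, zero_smul]
  have hP9 : A3 * A4 = 0 := by
    rw [hA3def, hA4def, _root_.vecMulVec_mul_vecMulVec, hd_w'f, zero_smul]
  have hA1K : vecMulVec f w * K = A1 := by rw [vecMulVec_mul_mat, hvK, hA1def, hw'def]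
  have hA2K : vecMulVec w f * K = A2 := by rw [vecMulVec_mul_mat, hvK, hA2def, hf'def]
  have hA3K : vecMulVec w w * K = A3 := by rw [vecMulVec_mul_mat, hvK, hA3def, hw'def]
  have hA4K : vecMulVec f f * K = A4 := by rw [vecMulVec_mul_mat, hvK, hA4def, hf'def]
  set R : ℝ → Matrix {S // S ∈ 𝒮} {S // S ∈ 𝒮} ℝ :=
    fun t => t • (vecMulVec w f + vecMulVec f w) + (-(t ^ 2 * a)) • vecMulVec f f with hRdef
  have hRt : ∀ t : ℝ, R t = t • (vecMulVec w f + vecMulVec f w)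
      + (-(t ^ 2 * a)) • vecMulVec f f := fun t => by rw [hRdef]
  have hNK : ∀ t : ℝ, N t * K = 1 + t • (A1 + A2) + (s * t ^ 2) • A3 := by
    intro t
    rw [hNt t]
    simp only [Matrix.add_mul, Matrix.smul_mul, hN0K, hA1K, hA2K, hA3K]
  have hRK : ∀ t : ℝ, R t * K = t • (A2 + A1) + (-(t ^ 2 * a)) • A4 := by
    intro t
    rw [hRt t]
    simp only [Matrix.add_mul, Matrix.smul_mul, hA2K, hA1K, hA4K]
  have hNH : ∀ t : ℝ, N t * (K - K * R t * K) = 1 := by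
    intro t
    have hexp : N t * (K - K * R t * K) = (N t * K) - (N t * K) * (R t * K) := by
      rw [Matrix.mul_sub]
      congr 1
      simp only [Matrix.mul_assoc]
    rw [hexp, hNK t, hRK t]
    simp only [Matrix.add_mul, Matrix.mul_add, Matrix.smul_mul, Matrix.mul_smul,
      Matrix.one_mul, Matrix.mul_one, smul_add, smul_smul, hP1, hP2, hP3, hP4, hP5,
      hP6, hP7, hP8, hP9, smul_zero]
    module
  have hNinv : ∀ t : ℝ, (N t)⁻¹ = K - K * R t * K := fun t =>
    Matrix.inv_eq_right_inv (hNH t)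
  -- trace formula
  set b2 : ℝ := w' ⬝ᵥ f' with hb2def
  set g2 : ℝ := f' ⬝ᵥ f' with hg2def
  have hKRK : ∀ t : ℝ, K * R t * K = t • (vecMulVec w' f' + vecMulVec f' w')
      + (-(t ^ 2 * a)) • vecMulVec f' f' := by
    intro t
    rw [hRt t]
    simp only [Matrix.mul_add, Matrix.add_mul, Matrix.mul_smul, Matrix.smul_mul,
      mat_mul_vecMulVec, vecMulVec_mul_mat, hvK]
    rw [hw'def, hf'def]
  have htrace : ∀ t : ℝ, ((N t)⁻¹).trace = K.trace - (2 * b2) * t + (a * g2) * t ^ 2 := by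
    intro t
    rw [hNinv t, Matrix.trace_sub, hKRK t, Matrix.trace_add, Matrix.trace_smul,
      Matrix.trace_smul, Matrix.trace_add, trace_vecMulVec', trace_vecMulVec',
      trace_vecMulVec']
    rw [show f' ⬝ᵥ w' = b2 from by rw [dotProduct_comm, hb2def], ← hb2def, ← hg2def]
    simp only [smul_eq_mul]
    ring
  -- positivity of the quadratic coefficient
  have hfne : f ≠ 0 := by
    intro h
    have : γ = 0 := by rw [hγdef, h]; simp
    rw [hγs] at this
    linarith
  have hf'ne : f' ≠ 0 := by
    intro h
    have h1 : γ = 0 := by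
      rw [hγdef, h, dotProduct_zero]
    rw [hγs] at h1
    linarith
  have hg2pos : 0 < g2 := by
    have h1 : g2 ≠ 0 := by
      rw [hg2def]
      exact fun hcon => hf'ne (dotProduct_self_eq_zero.mp hcon)
    have h2 : 0 ≤ g2 := by
      rw [hg2def]
      show 0 ≤ ∑ i, f' i * f' i
      exact Finset.sum_nonneg fun i _ => mul_self_nonneg _
    exact lt_of_le_of_ne h2 (Ne.symm h1)
  set Acoef : ℝ := a * g2 with hAdef
  have hApos : 0 < Acoef := mul_pos ha hg2pos
  set r : ℝ := b2 / Acoef with hrdef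
  have hAr : Acoef * r = b2 := by
    rw [hrdef]
    field_simp
  set tstar : ℝ := max (-1) (min 1 r) with htsdef
  have htsmem : tstar ∈ Set.Icc (-1 : ℝ) 1 :=
    ⟨le_max_left _ _, max_le (by norm_num) (min_le_left _ _)⟩
  have hQdiff : ∀ x y : ℝ, (K.trace - (2 * b2) * x + Acoef * x ^ 2)
      - (K.trace - (2 * b2) * y + Acoef * y ^ 2)
      = Acoef * ((x - r) ^ 2 - (y - r) ^ 2) := by
    intro x y
    linear_combination (2 * x - 2 * y) * hAr
  have hkey : ∀ t ∈ Set.Icc (-1 : ℝ) 1, t ≠ tstar → (tstar - r) ^ 2 < (t - r) ^ 2 := by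
    intro t ht hne
    rcases le_or_gt r (-1) with hr | hr
    · have hts : tstar = -1 := by
        rw [htsdef, min_eq_right (by linarith : r ≤ 1)]
        exact max_eq_left hr
      rw [hts] at hne ⊢
      have h1 : -1 < t := lt_of_le_of_ne ht.1 (Ne.symm hne)
      nlinarith [mul_pos (show (0:ℝ) < t + 1 by linarith)
        (show (0:ℝ) < t - 1 - 2 * r by linarith [ht.2])]
    · rcases le_or_gt 1 r with hr2 | hr2
      · have hts : tstar = 1 := by
          rw [htsdef, min_eq_left hr2]
          exact max_eq_right (by norm_num)
        rw [hts] at hne ⊢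
        have h1 : t < 1 := lt_of_le_of_ne ht.2 hne
        nlinarith [mul_pos (show (0:ℝ) < 1 - t by linarith)
          (show (0:ℝ) < 2 * r - 1 - t by linarith [ht.1])]
      · have hts : tstar = r := by
          rw [htsdef, min_eq_right hr2.le]
          exact max_eq_right hr.le
        rw [hts] at hne ⊢
        have h0 : (0:ℝ) < (t - r) ^ 2 := sq_pos_of_ne_zero (sub_ne_zero.mpr hne)
        simpa using h0
  -- conclusion
  clear_value N M e w F₀ s f K U R A1 A2 A3 A4 w' f' b2 g2 Acoef r tstar
  refine ⟨tstar, ⟨htsmem, fun t ht => ?_⟩, fun t' ht' => ?_⟩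
  · rw [htrace tstar, htrace t]
    by_cases h : t = tstar
    · rw [h]
    · have hlt := hkey t ht h
      have hd := hQdiff tstar t
      have h3 : Acoef * (((tstar : ℝ) - r) ^ 2 - (t - r) ^ 2)
          = -(Acoef * ((t - r) ^ 2 - (tstar - r) ^ 2)) := by ring
      linarith [hd, h3, mul_pos hApos (sub_pos.mpr hlt)]
  · obtain ⟨ht'mem, ht'min⟩ := ht'
    by_contra hne
    have h1 := ht'min tstar htsmem
    rw [htrace tstar, htrace t'] at h1
    have h2 := hkey t' ht'mem hne
    have hd := hQdiff tstar t'
    have h3 : Acoef * (((tstar : ℝ) - r) ^ 2 - (t' - r) ^ 2)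
        = -(Acoef * ((t' - r) ^ 2 - (tstar - r) ^ 2)) := by ring
    linarith [hd, h3, mul_pos hApos (sub_pos.mpr h2)]
end

section
/- Let B be an n×p real matrix, u ∈ ℝⁿ, g ∈ ℝᵖ, and let C be a p×p real symmetric positive semidefinite matrix. Then there exist real numbers α, β, γ with α ≥ 0 such that for every t ∈ ℝ, det((B + t·u gᵀ)ᵀ(B + t·u gᵀ) + C) = α t² + β t + γ. In particular, this determinant is a convex quadratic polynomial in t, and its maximum over t ∈ [−1,1] is attained at t = −1 or t = 1. -/
open Matrix Finset

variable {ι : Type*} [Fintype ι] [DecidableEq ι]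

private lemma det_rank_two_update (N : Matrix ι ι ℝ) (w h : ι → ℝ) :
    ∃ a b c : ℝ, ∀ t : ℝ,
      (N + t • (vecMulVec h w - vecMulVec w h)).det = a * t ^ 2 + b * t + c := by
  set E : Matrix ι ι ℝ := vecMulVec h w - vecMulVec w h with hE
  set f : (ι → ℝ) [⋀^ι]→ₗ[ℝ] ℝ := Matrix.detRowAlternating with hf
  set cs : Finset ι → ℝ := fun s => f (s.piecewise E N) with hcs
  have key1 : ∀ t : ℝ, (N + t • E).det = ∑ s : Finset ι, t ^ s.card * cs s := by
    intro t
    have h0 : (N + t • E).det = f ((t • E) + N) := by rw [add_comm]; rfl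
    rw [h0]
    have hadd := f.toMultilinearMap.map_add_univ (fun i => (t • E) i) (fun i => N i)
    refine Eq.trans hadd ?_
    refine Finset.sum_congr rfl fun s _ => ?_
    have hp : s.piecewise (fun i => (t • E) i) (fun i => N i)
        = s.piecewise (fun i => t • (s.piecewise E N) i) (s.piecewise E N) := by
      funext i
      by_cases hi : i ∈ s <;> funext j <;> simp [Finset.piecewise, hi]
    show f.toMultilinearMap (s.piecewise (fun i => (t • E) i) (fun i => N i)) = _
    rw [hp]
    rw [f.toMultilinearMap.map_piecewise_smul (fun _ => t) (s.piecewise E N) s]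
    simp [hcs, smul_eq_mul]
  have key2 : ∀ s : Finset ι, 3 ≤ s.card → cs s = 0 := by
    intro s hs
    refine AlternatingMap.map_linearDependent f _ ?_
    intro hli
    obtain ⟨s3, hsub, hcard⟩ := Finset.exists_subset_card_eq (n := 3) hs
    set W : Submodule ℝ (ι → ℝ) := Submodule.span ℝ {w, h} with hW
    have hmem : ∀ i : ι, i ∈ s → s.piecewise E N i ∈ W := by
      intro i hi
      refine (congrArg (· ∈ W) (Finset.piecewise_eq_of_mem _ _ _ hi : s.piecewise E N i = E i)).mpr ?_
      have hEi : E i = h i • w - w i • h := by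
        funext j
        simp [hE, vecMulVec_apply, Matrix.sub_apply, mul_comm]
      rw [hEi]
      exact sub_mem (Submodule.smul_mem _ _ (Submodule.subset_span (by simp)))
        (Submodule.smul_mem _ _ (Submodule.subset_span (by simp)))
    haveI hFD : Module.Finite ℝ W := Module.Finite.span_of_finite ℝ (Set.toFinite _)
    set v : {x // x ∈ s3} → W := fun i => ⟨s.piecewise E N i.1, hmem i.1 (hsub i.2)⟩ with hv
    have hvli : LinearIndependent ℝ v := by
      apply LinearIndependent.of_comp W.subtype
      exact hli.comp _ Subtype.val_injective
    have h3 : Fintype.card s3 ≤ Module.finrank ℝ W := hvli.fintype_card_le_finrank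
    rw [Fintype.card_coe, hcard] at h3
    have h2 : Module.finrank ℝ W ≤ 2 := by
      classical
      have h4 := finrank_span_finset_le_card (R := ℝ) ({w, h} : Finset (ι → ℝ))
      have h5 : ((({w, h} : Finset (ι → ℝ)) : Set (ι → ℝ))) = ({w, h} : Set (ι → ℝ)) := by simp
      rw [h5] at h4
      refine le_trans ?_ (h4.trans ?_)
      · exact le_of_eq rfl
      · simpa using Finset.card_insert_le w ({h} : Finset (ι → ℝ))
    omega
  refine ⟨∑ s : Finset ι, (if s.card = 2 then cs s else 0),
          ∑ s : Finset ι, (if s.card = 1 then cs s else 0),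
          ∑ s : Finset ι, (if s.card = 0 then cs s else 0), ?_⟩
  intro t
  rw [key1 t, Finset.sum_mul, Finset.sum_mul, ← Finset.sum_add_distrib, ← Finset.sum_add_distrib]
  refine Finset.sum_congr rfl fun s _ => ?_
  have hc : s.card = 0 ∨ s.card = 1 ∨ s.card = 2 ∨ 3 ≤ s.card := by omega
  rcases hc with h0|h0|h0|h0
  · simp [h0, mul_comm]
  · simp [h0, mul_comm]
  · simp [h0, mul_comm]
  · have h1 : s.card ≠ 0 := by omega
    have h2 : s.card ≠ 1 := by omega
    have h3 : s.card ≠ 2 := by omega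
    simp [h1, h2, h3, key2 s h0]

/-- Core computation in the proof of Theorem 1: the determinant of
`(B + t·u gᵀ)ᵀ(B + t·u gᵀ) + C` is a convex quadratic polynomial in `t`, whose maximum
over `[-1, 1]` is attained at `t = -1` or `t = 1`. -/
theorem stmt5 (n p : ℕ) (B : Matrix (Fin n) (Fin p) ℝ) (u : Fin n → ℝ) (g : Fin p → ℝ)
    (C : Matrix (Fin p) (Fin p) ℝ) (hC : C.PosSemidef) :
    ∃ α β γ : ℝ, 0 ≤ α ∧
      (∀ t : ℝ,
        ((B + t • Matrix.vecMulVec u g)ᵀ * (B + t • Matrix.vecMulVec u g) + C).det =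
          α * t ^ 2 + β * t + γ) ∧
      ∃ s : ℝ, (s = -1 ∨ s = 1) ∧ ∀ t ∈ Set.Icc (-1 : ℝ) 1,
        ((B + t • Matrix.vecMulVec u g)ᵀ * (B + t • Matrix.vecMulVec u g) + C).det ≤
          ((B + s • Matrix.vecMulVec u g)ᵀ * (B + s • Matrix.vecMulVec u g) + C).det := by
  classical
  obtain ⟨a, b, c, habc⟩ := det_rank_two_update
    (fromBlocks 1 (-B) Bᵀ C) (Sum.elim u 0) (Sum.elim 0 g)
  have hEblock : vecMulVec (Sum.elim (0 : Fin n → ℝ) g) (Sum.elim u (0 : Fin p → ℝ))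
      - vecMulVec (Sum.elim u (0 : Fin p → ℝ)) (Sum.elim (0 : Fin n → ℝ) g)
      = fromBlocks 0 (-(vecMulVec u g)) (vecMulVec g u) 0 := by
    ext (i|i) (j|j) <;> simp [vecMulVec_apply]
  have bridge : ∀ t : ℝ,
      ((B + t • Matrix.vecMulVec u g)ᵀ * (B + t • Matrix.vecMulVec u g) + C).det
      = a * t ^ 2 + b * t + c := by
    intro t
    rw [← habc t, hEblock]
    have hblk : fromBlocks (1 : Matrix (Fin n) (Fin n) ℝ) (-B) Bᵀ C
        + t • fromBlocks 0 (-(vecMulVec u g)) (vecMulVec g u) 0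
        = fromBlocks 1 (-(B + t • vecMulVec u g)) (B + t • vecMulVec u g)ᵀ C := by
      ext (i|i) (j|j) <;>
        simp [vecMulVec_apply, Matrix.one_apply, Matrix.add_apply, Matrix.smul_apply,
          Matrix.transpose_apply, mul_comm]
      · ring
    rw [hblk, Matrix.det_fromBlocks_one₁₁, Matrix.mul_neg, sub_neg_eq_add, add_comm]
  have hpsd : ∀ t : ℝ, 0 ≤ a * t ^ 2 + b * t + c := by
    intro t
    rw [← bridge t]
    have h2 : (B + t • Matrix.vecMulVec u g)ᴴ = (B + t • Matrix.vecMulVec u g)ᵀ := by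
      ext i j; simp [conjTranspose_apply]
    have h1 : ((B + t • Matrix.vecMulVec u g)ᵀ * (B + t • Matrix.vecMulVec u g) + C).PosSemidef := by
      have := (Matrix.posSemidef_conjTranspose_mul_self (B + t • Matrix.vecMulVec u g)).add hC
      rwa [h2] at this
    rw [h1.isHermitian.det_eq_prod_eigenvalues]
    exact Finset.prod_nonneg fun i _ => h1.eigenvalues_nonneg i
  have ha : 0 ≤ a := by
    by_contra hlt
    push_neg at hlt
    set T : ℝ := max 1 ((|b| + |c| + 1) / (-a)) with hTdef
    have hT1 : (1 : ℝ) ≤ T := le_max_left _ _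
    have hna : (0 : ℝ) < -a := by linarith
    have hT3 : |b| + |c| + 1 ≤ T * (-a) := by
      have hT2 : (|b| + |c| + 1) / (-a) ≤ T := le_max_right _ _
      exact (div_le_iff₀ hna).mp hT2
    have h4 : a * T ≤ -(|b| + |c| + 1) := by nlinarith
    have h5 : a * T * T ≤ -(|b| + |c| + 1) * T :=
      mul_le_mul_of_nonneg_right h4 (by linarith)
    have h0 := hpsd T
    nlinarith [le_abs_self b, le_abs_self c, abs_nonneg b, abs_nonneg c,
      mul_le_mul_of_nonneg_right (le_abs_self b) (by linarith : (0:ℝ) ≤ T),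
      mul_nonneg (sub_nonneg.mpr hT1) (by positivity : (0:ℝ) ≤ |c| + 1)]
  refine ⟨a, b, c, ha, bridge, ?_⟩
  by_cases hb : 0 ≤ b
  · refine ⟨1, Or.inr rfl, fun t ht => ?_⟩
    obtain ⟨ht1, ht2⟩ := ht
    rw [bridge t, bridge 1]
    have h1 : t ^ 2 ≤ 1 := by nlinarith
    nlinarith [mul_le_mul_of_nonneg_left h1 ha, mul_le_mul_of_nonneg_left ht2 hb]
  · push_neg at hb
    refine ⟨-1, Or.inl rfl, fun t ht => ?_⟩
    obtain ⟨ht1, ht2⟩ := ht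
    rw [bridge t, bridge (-1)]
    have h1 : t ^ 2 ≤ 1 := by nlinarith
    nlinarith [mul_le_mul_of_nonneg_left h1 ha, mul_le_mul_of_nonpos_left ht1 (le_of_lt hb)]
end

section
/- Let D be a symmetric positive definite p×p real matrix, let l ∈ ℝᵖ, set v = lᵀD l and V = (1 − v)·D + D l lᵀ D. Then V is symmetric; if v ≤ 1 then V is positive semidefinite; if v < 1 then V is positive definite; and if p ≥ 2 then V is positive definite if and only if v < 1. -/
open Matrix

lemma stmt7_aux_exists (p : ℕ) (hp : 2 ≤ p) (w : Fin p → ℝ) :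
    ∃ x : Fin p → ℝ, x ≠ 0 ∧ x ⬝ᵥ w = 0 := by
  let f : (Fin p → ℝ) →ₗ[ℝ] ℝ :=
    { toFun := fun x => x ⬝ᵥ w
      map_add' := fun a b => add_dotProduct a b w
      map_smul' := fun c a => smul_dotProduct c a w }
  have hker : LinearMap.ker f ≠ ⊥ := by
    intro h
    have h1 := LinearMap.finrank_range_add_finrank_ker f
    rw [h, finrank_bot] at h1
    have h2 : Module.finrank ℝ (LinearMap.range f) ≤ 1 :=
      (Submodule.finrank_le _).trans_eq (Module.finrank_self ℝ)
    simp [Module.finrank_pi] at h1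
    omega
  obtain ⟨x, hx, hx0⟩ := Submodule.exists_mem_ne_zero_of_ne_bot hker
  exact ⟨x, hx0, hx⟩

/-- Properties of the matrix `V = (1 − v)·D + D l lᵀ D` of the `D`-criterion
row-exchange formula, where `v = lᵀD l` is the leverage: `V` is symmetric; if `v ≤ 1`
it is positive semidefinite; if `v < 1` it is positive definite; and for `p ≥ 2` it is
positive definite if and only if `v < 1`. -/
theorem stmt7 (p : ℕ) (D : Matrix (Fin p) (Fin p) ℝ) (hD : D.PosDef) (l : Fin p → ℝ) :
    ((1 - l ⬝ᵥ (D *ᵥ l)) • D + Matrix.vecMulVec (D *ᵥ l) (D *ᵥ l)).IsSymm ∧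
    (l ⬝ᵥ (D *ᵥ l) ≤ 1 →
      ((1 - l ⬝ᵥ (D *ᵥ l)) • D + Matrix.vecMulVec (D *ᵥ l) (D *ᵥ l)).PosSemidef) ∧
    (l ⬝ᵥ (D *ᵥ l) < 1 →
      ((1 - l ⬝ᵥ (D *ᵥ l)) • D + Matrix.vecMulVec (D *ᵥ l) (D *ᵥ l)).PosDef) ∧
    (2 ≤ p →
      (((1 - l ⬝ᵥ (D *ᵥ l)) • D + Matrix.vecMulVec (D *ᵥ l) (D *ᵥ l)).PosDef ↔
        l ⬝ᵥ (D *ᵥ l) < 1)) := by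
  set v : ℝ := l ⬝ᵥ (D *ᵥ l) with hv
  set w : Fin p → ℝ := D *ᵥ l with hw
  set V : Matrix (Fin p) (Fin p) ℝ := (1 - v) • D + Matrix.vecMulVec w w with hV
  have hDsymm : Dᵀ = D := hD.1
  -- symmetry
  have hsymm : V.IsSymm := by
    unfold Matrix.IsSymm
    rw [hV, transpose_add, transpose_smul, hDsymm]
    congr 1
    ext i j
    simp [transpose_apply, vecMulVec_apply, mul_comm]
  have hherm : V.IsHermitian := by
    rw [Matrix.IsHermitian]
    simpa [Matrix.conjTranspose_eq_transpose_of_trivial, Matrix.IsSymm] using hsymm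
  -- quadratic form
  have hform : ∀ x : Fin p → ℝ, x ⬝ᵥ (V *ᵥ x) = (1 - v) * (x ⬝ᵥ (D *ᵥ x)) + (x ⬝ᵥ w) ^ 2 := by
    intro x
    have h1 : Matrix.vecMulVec w w *ᵥ x = (w ⬝ᵥ x) • w := by
      ext j
      simp [Matrix.mulVec, vecMulVec_apply, dotProduct, Finset.mul_sum, mul_assoc,
        mul_comm, mul_left_comm]
    rw [hV, add_mulVec, smul_mulVec, dotProduct_add, dotProduct_smul, h1,
      dotProduct_smul, dotProduct_comm w x]
    simp only [smul_eq_mul]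
    ring
  -- positive semidefinite when v ≤ 1
  have hpsd : v ≤ 1 → V.PosSemidef := by
    intro hv1
    refine Matrix.PosSemidef.of_dotProduct_mulVec_nonneg hherm fun x => ?_
    simp only [RCLike.re_to_real, star_trivial, hform x]
    have := hD.posSemidef.dotProduct_mulVec_nonneg x
    simp only [RCLike.re_to_real, star_trivial] at this
    nlinarith [sq_nonneg (x ⬝ᵥ w)]
  -- positive definite when v < 1
  have hpd : v < 1 → V.PosDef := by
    intro hv1
    refine Matrix.PosDef.of_dotProduct_mulVec_pos hherm fun x hx => ?_
    simp only [RCLike.re_to_real, star_trivial, hform x]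
    have := hD.dotProduct_mulVec_pos hx
    simp only [RCLike.re_to_real, star_trivial] at this
    nlinarith [sq_nonneg (x ⬝ᵥ w)]
  refine ⟨hsymm, hpsd, hpd, fun hp => ⟨fun hVpd => ?_, hpd⟩⟩
  -- converse for p ≥ 2
  by_contra hv1
  push_neg at hv1
  obtain ⟨x, hx0, hxw⟩ := stmt7_aux_exists p hp w
  have hq := hVpd.dotProduct_mulVec_pos hx0
  simp only [RCLike.re_to_real, star_trivial, hform x, hxw] at hq
  have hDx := hD.dotProduct_mulVec_pos hx0
  simp only [RCLike.re_to_real, star_trivial] at hDx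
  nlinarith
end

section
/- Let A be a symmetric positive definite p×p real matrix with D = A⁻¹, let W be a symmetric p×p real matrix, let u, t ∈ ℝᵖ, and suppose à = A + t tᵀ − u uᵀ is invertible. Set v = uᵀD u, Δ = (1 + tᵀD t)(1 − v) + (uᵀD t)², φ = uᵀD W D u, and U = (1 − v)·D W D + D u uᵀ D W D + D W D u uᵀ D − φ·D. Then Δ ≠ 0 and tr(W D) − tr(W Ã⁻¹) = (tᵀU t − φ)/Δ. -/
open Matrix

lemma vv_mul {p : ℕ} (x y : Fin p → ℝ) (M : Matrix (Fin p) (Fin p) ℝ) :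
    vecMulVec x y * M = vecMulVec x (y ᵥ* M) := by
  ext i j
  simp [mul_apply, vecMulVec_apply, vecMul, dotProduct, Finset.mul_sum, mul_assoc]

lemma mul_vv {p : ℕ} (M : Matrix (Fin p) (Fin p) ℝ) (x y : Fin p → ℝ) :
    M * vecMulVec x y = vecMulVec (M *ᵥ x) y := by
  ext i j
  simp [mul_apply, vecMulVec_apply, mulVec, dotProduct, Finset.sum_mul, mul_assoc]

lemma vv_vv {p : ℕ} (x y z w : Fin p → ℝ) :
    vecMulVec x y * vecMulVec z w = (y ⬝ᵥ z) • vecMulVec x w := by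
  ext i j
  simp only [mul_apply, vecMulVec_apply, dotProduct, Matrix.smul_apply, smul_eq_mul, Finset.sum_mul]
  exact Finset.sum_congr rfl fun k _ => by ring

lemma trace_mul_vv {p : ℕ} (W : Matrix (Fin p) (Fin p) ℝ) (x y : Fin p → ℝ) :
    (W * vecMulVec x y).trace = y ⬝ᵥ (W *ᵥ x) := by
  simp only [trace, diag, mul_apply, vecMulVec_apply, dotProduct, mulVec, Finset.mul_sum]
  apply Finset.sum_congr rfl; intro i _
  apply Finset.sum_congr rfl; intro j _
  ring

lemma vv_mulVec {p : ℕ} (x y z : Fin p → ℝ) : vecMulVec x y *ᵥ z = (y ⬝ᵥ z) • x := by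
  ext i
  simp only [mulVec, vecMulVec_apply, dotProduct, Pi.smul_apply, smul_eq_mul, Finset.sum_mul]
  exact Finset.sum_congr rfl fun j _ => by ring

lemma vv_smul_left {p : ℕ} (c : ℝ) (x y : Fin p → ℝ) :
    vecMulVec (c • x) y = c • vecMulVec x y := by
  ext i j; simp [vecMulVec_apply, mul_assoc]

lemma vv_smul_right {p : ℕ} (c : ℝ) (x y : Fin p → ℝ) :
    vecMulVec x (c • y) = c • vecMulVec x y := by
  ext i j; simp [vecMulVec_apply]; ring

lemma dot_symm {p : ℕ} {M : Matrix (Fin p) (Fin p) ℝ} (hM : Mᵀ = M) (x y : Fin p → ℝ) :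
    x ⬝ᵥ M *ᵥ y = y ⬝ᵥ M *ᵥ x := by
  simp only [dotProduct, mulVec, Finset.mul_sum]
  rw [Finset.sum_comm]
  refine Finset.sum_congr rfl fun i _ => Finset.sum_congr rfl fun j _ => ?_
  have hij : M j i = M i j := congrFun (congrFun hM i) j
  rw [hij]; ring

/-- The weighted `A`-criterion row-exchange formula (Equation 6 of the paper and its
weighted generalization): exchanging row `u` of the model matrix for a new row `t`
changes `tr(W(LᵀL)⁻¹)` by exactly `(tᵀUt − φ)/Δ`. -/
theorem stmt9 (p : ℕ) (A : Matrix (Fin p) (Fin p) ℝ) (hA : A.PosDef)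
    (D : Matrix (Fin p) (Fin p) ℝ) (hD : D = A⁻¹)
    (W : Matrix (Fin p) (Fin p) ℝ) (hW : W.IsSymm)
    (u t : Fin p → ℝ)
    (Atil : Matrix (Fin p) (Fin p) ℝ)
    (hAtil : Atil = A + Matrix.vecMulVec t t - Matrix.vecMulVec u u)
    (hAtilInv : IsUnit Atil.det)
    (v Δ φ : ℝ)
    (hv : v = u ⬝ᵥ (D *ᵥ u))
    (hΔ : Δ = (1 + t ⬝ᵥ (D *ᵥ t)) * (1 - v) + (u ⬝ᵥ (D *ᵥ t)) ^ 2)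
    (hφ : φ = u ⬝ᵥ ((D * W * D) *ᵥ u))
    (U : Matrix (Fin p) (Fin p) ℝ)
    (hU : U = (1 - v) • (D * W * D) + D * Matrix.vecMulVec u u * (D * W * D) +
      (D * W * D) * Matrix.vecMulVec u u * D - φ • D) :
    Δ ≠ 0 ∧ (W * D).trace - (W * Atil⁻¹).trace = (t ⬝ᵥ (U *ᵥ t) - φ) / Δ := by
  have hAd : IsUnit A.det := hA.det_pos.ne'.isUnit
  have hAD : A * D = 1 := by rw [hD]; exact A.mul_nonsing_inv hAd
  have hDsymm : Dᵀ = D := by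
    rw [hD, Matrix.transpose_nonsing_inv,
      ← conjTranspose_eq_transpose_of_trivial, hA.isHermitian.eq]
  have hWsymm : Wᵀ = W := hW
  set a := t ⬝ᵥ (D *ᵥ t) with ha
  set b := u ⬝ᵥ (D *ᵥ t) with hb
  set X := D *ᵥ t with hX
  set Y := D *ᵥ u with hY
  -- basic dot product facts
  have htX : t ⬝ᵥ X = a := rfl
  have htY : t ⬝ᵥ Y = b := dot_symm hDsymm t u
  have huX : u ⬝ᵥ X = b := rfl
  have huY : u ⬝ᵥ Y = v := hv.symm
  have hvmt : t ᵥ* D = X := by rw [← hDsymm, vecMul_transpose]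
  have hvmu : u ᵥ* D = Y := by rw [← hDsymm, vecMul_transpose]
  have hAX : A *ᵥ X = t := by rw [hX, mulVec_mulVec, hAD, one_mulVec]
  have hAY : A *ᵥ Y = u := by rw [hY, mulVec_mulVec, hAD, one_mulVec]
  -- sandwich identity
  have hvm : ∀ x : Fin p → ℝ, x ᵥ* D = D *ᵥ x := by
    intro x
    conv_lhs => rw [← hDsymm]
    exact vecMul_transpose D x
  have hsand : ∀ x y : Fin p → ℝ, x ⬝ᵥ (D * W * D) *ᵥ y = (D *ᵥ x) ⬝ᵥ W *ᵥ (D *ᵥ y) := by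
    intro x y
    rw [← mulVec_mulVec, ← mulVec_mulVec, dotProduct_mulVec x D, hvm x]
  set B' := Δ • D + (v - 1) • vecMulVec X X - b • (vecMulVec X Y + vecMulVec Y X)
      + (1 + a) • vecMulVec Y Y with hB'
  have key : Atil * B' = Δ • (1 : Matrix (Fin p) (Fin p) ℝ) := by
    rw [hAtil, hB']
    simp only [Matrix.mul_add, Matrix.add_mul, Matrix.mul_sub, Matrix.sub_mul,
      Matrix.mul_smul, Matrix.smul_mul, mul_vv, vv_mul, vv_vv, hAD, vv_mulVec,
      vv_smul_left, vv_smul_right, smul_add, smul_sub, smul_smul,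
      hvmt, hvmu, htX, htY, huX, huY, hAX, hAY]
    rw [hΔ]
    match_scalars <;> ring
  have hXu : X ⬝ᵥ u = b := by rw [dotProduct_comm]
  have hYu : Y ⬝ᵥ u = v := by rw [dotProduct_comm]; exact huY
  have hXt : X ⬝ᵥ t = a := by rw [dotProduct_comm]
  have hYt : Y ⬝ᵥ t = b := by rw [dotProduct_comm]; exact htY
  have hann : 0 ≤ a := by
    have hDpd : D.PosDef := hD ▸ hA.inv
    have := hDpd.posSemidef.re_dotProduct_nonneg t
    rw [ha, hX]
    simpa [dotProduct] using this
  have hΔne : Δ ≠ 0 := by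
    intro h0
    have hB0 : B' = 0 := by
      calc B' = Atil⁻¹ * Atil * B' := by rw [Matrix.nonsing_inv_mul _ hAtilInv, Matrix.one_mul]
        _ = Atil⁻¹ * (Δ • 1) := by rw [Matrix.mul_assoc, key]
        _ = 0 := by rw [h0]; simp
    have hq : u ⬝ᵥ (B' *ᵥ u) = Δ * v + (v - 1) * (b * b) - b * (v * b + b * v)
        + (1 + a) * (v * v) := by
      rw [hB']
      simp only [Matrix.add_mulVec, Matrix.sub_mulVec, smul_mulVec, vv_mulVec,
        hXu, hYu, ← hY, dotProduct_add, dotProduct_sub, dotProduct_smul, smul_eq_mul,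
        huX, huY]
    rw [hB0] at hq
    have hΔ0 : (1 + a) * (1 - v) + b ^ 2 = 0 := by rw [← hΔ]; exact h0
    have : (0 : ℝ) = 1 + a := by
      rw [show u ⬝ᵥ ((0 : Matrix (Fin p) (Fin p) ℝ) *ᵥ u) = 0 by simp] at hq
      rw [hq, h0]
      linear_combination (- 1 - v) * hΔ0
    linarith
  refine ⟨hΔne, ?_⟩
  have hInv : Atil⁻¹ = Δ⁻¹ • B' := by
    apply Matrix.inv_eq_right_inv
    rw [Matrix.mul_smul, key, smul_smul, inv_mul_cancel₀ hΔne, one_smul]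
  -- dot-product facts through D*W*D
  have f1 : t ⬝ᵥ (D * W * D) *ᵥ t = X ⬝ᵥ W *ᵥ X := by rw [hsand, ← hX]
  have f2 : u ⬝ᵥ (D * W * D) *ᵥ t = Y ⬝ᵥ W *ᵥ X := by rw [hsand, ← hX, ← hY]
  have f3 : t ⬝ᵥ (D * W * D) *ᵥ u = X ⬝ᵥ W *ᵥ Y := by rw [hsand, ← hX, ← hY]
  have hφ' : φ = Y ⬝ᵥ W *ᵥ Y := by rw [hφ, hsand, ← hY]
  have hsymW : X ⬝ᵥ W *ᵥ Y = Y ⬝ᵥ W *ᵥ X := dot_symm hWsymm X Y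
  -- trace of the new inverse
  have htr : (W * Atil⁻¹).trace =
      Δ⁻¹ * (Δ * (W * D).trace + (v - 1) * (X ⬝ᵥ W *ᵥ X)
        - b * (Y ⬝ᵥ W *ᵥ X + X ⬝ᵥ W *ᵥ Y) + (1 + a) * φ) := by
    rw [hInv, hB', hφ']
    simp only [Matrix.mul_smul, smul_add, smul_sub, Matrix.mul_add, Matrix.mul_sub,
      trace_smul, trace_add, trace_sub, trace_mul_vv, smul_eq_mul]
    ring
  have hUt : t ⬝ᵥ (U *ᵥ t) = (1 - v) * (X ⬝ᵥ W *ᵥ X) + (Y ⬝ᵥ W *ᵥ X) * b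
      + b * (X ⬝ᵥ W *ᵥ Y) - φ * a := by
    have g2 : (D * vecMulVec u u * (D * W * D)) *ᵥ t = (Y ⬝ᵥ W *ᵥ X) • Y := by
      rw [← mulVec_mulVec t (D * vecMulVec u u) (D * W * D),
        ← mulVec_mulVec _ D (vecMulVec u u), vv_mulVec, f2, mulVec_smul, ← hY]
    have g3 : (D * W * D * vecMulVec u u * D) *ᵥ t = b • ((D * W * D) *ᵥ u) := by
      rw [← mulVec_mulVec t (D * W * D * vecMulVec u u) D, ← hX,
        ← mulVec_mulVec X (D * W * D) (vecMulVec u u), vv_mulVec, huX, mulVec_smul]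
    rw [hU]
    simp only [Matrix.add_mulVec, Matrix.sub_mulVec, smul_mulVec, g2, g3,
      dotProduct_add, dotProduct_sub, dotProduct_smul, smul_eq_mul, f1, f3, htY, ← hX, htX]
  rw [htr, hUt, hsymW]
  field_simp
  ring
end

section
/- Let F be an n×p real matrix and Z an n×b real matrix, let L = [F | Z], and assume LᵀL is invertible; let P_Z = Z(ZᵀZ)⁻¹Zᵀ. For w > 0 let W_w be the (p+b)×(p+b) diagonal matrix whose first p diagonal entries equal 1 and whose last b diagonal entries equal w. Then tr(W_w (LᵀL)⁻¹) tends to tr((Fᵀ(I − P_Z)F)⁻¹) as w tends to 0 from the right. -/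
open Matrix

lemma trace_fromBlocks' {m n R : Type*} [Fintype m] [Fintype n] [AddCommMonoid R]
    (A : Matrix m m R) (B : Matrix m n R) (C : Matrix n m R) (D : Matrix n n R) :
    (fromBlocks A B C D).trace = A.trace + D.trace := by
  simp [Matrix.trace, Fintype.sum_sum_type, Matrix.diag]

/-- The weighted `A`-criterion `tr(W_w (LᵀL)⁻¹)` tends to the `A_s`-criterion
`tr((Fᵀ(I − P_Z)F)⁻¹)` as the nuisance weight `w` tends to `0⁺`. -/
theorem stmt12 (n p b : ℕ) (F : Matrix (Fin n) (Fin p) ℝ) (Z : Matrix (Fin n) (Fin b) ℝ)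
    (hL : IsUnit ((Matrix.fromCols F Z)ᵀ * Matrix.fromCols F Z).det) :
    Filter.Tendsto
      (fun w : ℝ =>
        (Matrix.fromBlocks (1 : Matrix (Fin p) (Fin p) ℝ) 0 0
            (w • (1 : Matrix (Fin b) (Fin b) ℝ)) *
          ((Matrix.fromCols F Z)ᵀ * Matrix.fromCols F Z)⁻¹).trace)
      (nhdsWithin 0 (Set.Ioi 0))
      (nhds ((Fᵀ * (1 - Z * (Zᵀ * Z)⁻¹ * Zᵀ) * F)⁻¹).trace) := by
  classical
  set L := Matrix.fromCols F Z with hLdef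
  have hM : Lᵀ * L = fromBlocks (Fᵀ * F) (Fᵀ * Z) (Zᵀ * F) (Zᵀ * Z) := by
    rw [hLdef, transpose_fromCols, fromRows_mul_fromCols]
  have hLmul : Function.Injective (Lᵀ * L).mulVec := mulVec_injective_iff_isUnit.2
    ((isUnit_iff_isUnit_det _).2 hL)
  have hLinj : ∀ v, L *ᵥ v = 0 → v = 0 := by
    intro v hv
    have : (Lᵀ * L) *ᵥ v = (Lᵀ * L) *ᵥ 0 := by
      rw [← mulVec_mulVec, hv, mulVec_zero, mulVec_zero]
    exact hLmul this
  have hZinj : ∀ v, Z *ᵥ v = 0 → v = 0 := by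
    intro v hv
    have h0 : L *ᵥ (Sum.elim 0 v) = 0 := by
      rw [hLdef, fromCols_mulVec_sumElim, hv, mulVec_zero, zero_add]
    ext i
    simpa using congr_fun (hLinj _ h0) (Sum.inr i)
  have hZZker : ∀ v, (Zᵀ * Z) *ᵥ v = 0 → v = 0 := by
    intro v hv
    apply hZinj
    rw [← dotProduct_self_eq_zero (v := Z *ᵥ v)]
    calc (Z *ᵥ v) ⬝ᵥ (Z *ᵥ v) = ((Z *ᵥ v) ᵥ* Z) ⬝ᵥ v := dotProduct_mulVec _ _ _
    _ = (Zᵀ *ᵥ (Z *ᵥ v)) ⬝ᵥ v := by rw [mulVec_transpose]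
    _ = ((Zᵀ * Z) *ᵥ v) ⬝ᵥ v := by rw [mulVec_mulVec]
    _ = 0 := by rw [hv, zero_dotProduct]
  have hZZ : IsUnit (Zᵀ * Z) := by
    rw [← mulVec_injective_iff_isUnit]
    intro x y hxy
    have : (Zᵀ * Z) *ᵥ (x - y) = 0 := by
      rw [mulVec_sub, hxy, sub_self]
    exact sub_eq_zero.mp (hZZker _ this)
  letI iZZ : Invertible (Zᵀ * Z) := hZZ.invertible
  letI iM : Invertible (Lᵀ * L) := ((isUnit_iff_isUnit_det _).2 hL).invertible
  letI iMb : Invertible (fromBlocks (Fᵀ * F) (Fᵀ * Z) (Zᵀ * F) (Zᵀ * Z)) := hM ▸ iM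
  letI iS : Invertible (Fᵀ * F - Fᵀ * Z * ⅟(Zᵀ * Z) * (Zᵀ * F)) :=
    invertibleOfFromBlocks₂₂Invertible (Fᵀ * F) (Fᵀ * Z) (Zᵀ * F) (Zᵀ * Z)
  -- identify the Schur complement with Fᵀ(1-P)F
  have hS : Fᵀ * (1 - Z * (Zᵀ * Z)⁻¹ * Zᵀ) * F = Fᵀ * F - Fᵀ * Z * ⅟(Zᵀ * Z) * (Zᵀ * F) := by
    rw [invOf_eq_nonsing_inv, Matrix.mul_sub, Matrix.sub_mul, Matrix.mul_one]
    simp only [Matrix.mul_assoc]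
  have hNinv : (Lᵀ * L)⁻¹ =
      fromBlocks (⅟(Fᵀ * F - Fᵀ * Z * ⅟(Zᵀ * Z) * (Zᵀ * F)))
        (-(⅟(Fᵀ * F - Fᵀ * Z * ⅟(Zᵀ * Z) * (Zᵀ * F)) * (Fᵀ * Z) * ⅟(Zᵀ * Z)))
        (-(⅟(Zᵀ * Z) * (Zᵀ * F) * ⅟(Fᵀ * F - Fᵀ * Z * ⅟(Zᵀ * Z) * (Zᵀ * F))))
        (⅟(Zᵀ * Z) + ⅟(Zᵀ * Z) * (Zᵀ * F) * ⅟(Fᵀ * F - Fᵀ * Z * ⅟(Zᵀ * Z) * (Zᵀ * F)) *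
          (Fᵀ * Z) * ⅟(Zᵀ * Z)) := by
    rw [hM, ← invOf_eq_nonsing_inv, invOf_fromBlocks₂₂_eq]
  have key : ∀ w : ℝ,
      (Matrix.fromBlocks (1 : Matrix (Fin p) (Fin p) ℝ) 0 0
          (w • (1 : Matrix (Fin b) (Fin b) ℝ)) * (Lᵀ * L)⁻¹).trace =
        (⅟(Fᵀ * F - Fᵀ * Z * ⅟(Zᵀ * Z) * (Zᵀ * F))).trace +
          w * (⅟(Zᵀ * Z) + ⅟(Zᵀ * Z) * (Zᵀ * F) *
            ⅟(Fᵀ * F - Fᵀ * Z * ⅟(Zᵀ * Z) * (Zᵀ * F)) * (Fᵀ * Z) * ⅟(Zᵀ * Z)).trace := by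
    intro w
    rw [hNinv, fromBlocks_multiply]
    simp only [Matrix.one_mul, Matrix.zero_mul, Matrix.mul_zero, add_zero, zero_add,
      smul_mul_assoc, Matrix.one_mul, trace_fromBlocks', trace_smul, smul_eq_mul]
  have hT : ((Fᵀ * (1 - Z * (Zᵀ * Z)⁻¹ * Zᵀ) * F)⁻¹).trace =
      (⅟(Fᵀ * F - Fᵀ * Z * ⅟(Zᵀ * Z) * (Zᵀ * F))).trace := by
    rw [hS, ← invOf_eq_nonsing_inv]
  simp only [key, hT]
  have hc : Filter.Tendsto
      (fun w : ℝ => (⅟(Fᵀ * F - Fᵀ * Z * ⅟(Zᵀ * Z) * (Zᵀ * F))).trace +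
        w * (⅟(Zᵀ * Z) + ⅟(Zᵀ * Z) * (Zᵀ * F) *
          ⅟(Fᵀ * F - Fᵀ * Z * ⅟(Zᵀ * Z) * (Zᵀ * F)) * (Fᵀ * Z) * ⅟(Zᵀ * Z)).trace)
      (nhds 0) (nhds ((⅟(Fᵀ * F - Fᵀ * Z * ⅟(Zᵀ * Z) * (Zᵀ * F))).trace)) := by
    have h1 : Filter.Tendsto (fun w : ℝ => w * (⅟(Zᵀ * Z) + ⅟(Zᵀ * Z) * (Zᵀ * F) *
          ⅟(Fᵀ * F - Fᵀ * Z * ⅟(Zᵀ * Z) * (Zᵀ * F)) * (Fᵀ * Z) * ⅟(Zᵀ * Z)).trace)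
        (nhds 0) (nhds 0) := by
      simpa using Filter.tendsto_id.mul (tendsto_const_nhds (f := nhds (0:ℝ)))
    simpa using Filter.Tendsto.add tendsto_const_nhds h1
  exact hc.mono_left nhdsWithin_le_nhds
end
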